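/- arXiv:1511.05479 — 3 statements merged into one kernel-verified Lean document; each statement's English description precedes it below -/
import Mathlib

section
/- Let P be a point set and i₀ an index such that P is a weak (ε_{2^i}, 2)-uniform noisy sample of a compact set K for all i > i₀, and a (genuine) (ε_{2^{i₀}}, 2)-uniform noisy sample of K. Then the output P₀ of Algorithm ParfreeDeclutter(P) satisfies δ_H(P₀, K) ≤ (87 + 16√2) ε_{2^{i₀}}. -/
open Metric

/-- Core loop of the Declutter algorithm: scan the (pre-sorted) list, keeping a point `p`
iff no previously kept point lies in the open ball `B(p, 2 f p)` (w.r.t. distance `d`). -/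
noncomputable def declutterAux {X : Type*} (d : X → X → ℝ) (f : X → ℝ) :
    List X → List X → List X
  | Q, [] => Q
  | Q, p :: rest =>
    if ∀ q ∈ Q, 2 * f p ≤ d p q then declutterAux d f (Q ++ [p]) rest
    else declutterAux d f Q rest

noncomputable def declutter {X : Type*} (d : X → X → ℝ) (f : X → ℝ) (L : List X) : List X :=
  declutterAux d f [] L

/-- `Q` is a possible output of the Declutter algorithm on `P`, with robust distance
function `f`: the points of `P` are processed in nondecreasing order of `f`
(ties broken arbitrarily). -/
def IsDeclutterOutput {X : Type*} (d : X → X → ℝ) (f : X → ℝ) (P : Finset X)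
    (Q : List X) : Prop :=
  ∃ L : List X, L.Perm P.toList ∧ L.Pairwise (fun a b => f a ≤ f b) ∧ Q = declutter d f L

variable {X : Type*} [MetricSpace X]

/-- Sorted (nondecreasing) list of distances from `x` to the points of `P`. -/
noncomputable def sortedDists (P : Finset X) (x : X) : List ℝ :=
  (P.val.map (dist x)).sort (· ≤ ·)

/-- The k-distance: root mean square of the distances to the k nearest neighbors in `P`. -/
noncomputable def kdist (P : Finset X) (k : ℕ) (x : X) : ℝ :=
  Real.sqrt ((1 / (k : ℝ)) * (((sortedDists P x).take k).map (fun r => r ^ 2)).sum)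

/-- `P` is an ε_k-noisy sample of `K`:
(1) the k-distance is at most ε on `K`; (2) every point of the space is within
`kdist + ε` of `K`. -/
def NoisySample (P : Finset X) (k : ℕ) (K : Set X) (ε : ℝ) : Prop :=
  (∀ x ∈ K, kdist P k x ≤ ε) ∧ ∀ x : X, infDist x K ≤ kdist P k x + ε

open scoped Classical in
/-- One iteration of the ParfreeDeclutter loop: `P'` is obtained from `P` by decluttering
with parameter `k` and then resampling all points of `P` within distance
`C · d_{P,k}(q)` of some kept point `q`, with resampling constant `C = 10 + 2√2`. -/
def IsParfreeStep (P P' : Finset X) (k : ℕ) : Prop :=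
  ∃ Q : List X, IsDeclutterOutput (fun a b => dist a b) (kdist P k) P Q ∧
    P' = P.filter
      (fun p => ∃ q ∈ Q, dist p q ≤ (10 + 2 * Real.sqrt 2) * kdist P k q)

namespace PFD

lemma sum_map_fin (A : List ℝ) (f : ℝ → ℝ) : (A.map f).sum = ∑ i : Fin A.length, f (A.get i) := by
  induction A with
  | nil => simp
  | cons a t ih =>
    rw [List.map_cons, List.sum_cons, ih]
    exact (Fin.sum_univ_succ (fun i => f ((a :: t).get i))).symm

lemma countP_take_le (L : List ℝ) (k : ℕ) (p : ℝ → Bool) :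
    (L.take k).countP p ≤ L.countP p := by
  conv_rhs => rw [← List.take_append_drop k L]
  rw [List.countP_append]; omega

/-- W1 : in a sorted list, at least `i+1` elements are `≤` the `i`-th entry. -/
lemma sorted_countP_get (L : List ℝ) (hL : L.Pairwise (· ≤ ·)) (i : ℕ) (h : i < L.length) :
    i + 1 ≤ L.countP (fun a => a ≤ L.get ⟨i, h⟩) := by
  induction L generalizing i with
  | nil => simp at h
  | cons b t ih =>
    rcases i with _ | i
    · have hb : b ≤ (b :: t).get ⟨0, h⟩ := le_rfl
      rw [List.countP_cons]
      simp [hb]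
    · have ht : t.Pairwise (· ≤ ·) := hL.of_cons
      have h' : i < t.length := by simpa using h
      have hb : b ≤ t.get ⟨i, h'⟩ := (List.pairwise_cons.mp hL).1 _ (t.get_mem ⟨i, h'⟩)
      have hg : (b :: t).get ⟨i+1, h⟩ = t.get ⟨i, h'⟩ := rfl
      rw [hg, List.countP_cons]
      have := ih ht i h'
      simp only [hb, decide_eq_true_eq, if_pos]
      omega

/-- W2 : if at least `k` elements of a sorted list are `≤ c`, then every element of
`take k` is `≤ c`. -/
lemma sorted_take_le (L : List ℝ) (hL : L.Pairwise (· ≤ ·)) (k : ℕ) (c : ℝ)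
    (hc : k ≤ L.countP (fun a => a ≤ c)) : ∀ a ∈ L.take k, a ≤ c := by
  induction L generalizing k with
  | nil => simp
  | cons b t ih =>
    rcases k with _ | k
    · simp
    · by_cases hb : b ≤ c
      · intro a ha
        rw [List.take_succ_cons] at ha
        rcases List.mem_cons.mp ha with rfl | ha
        · exact hb
        · refine ih hL.of_cons k ?_ a ha
          rw [List.countP_cons] at hc
          simp only [hb, decide_eq_true_eq, if_pos] at hc
          omega
      · exfalso
        have h0 : t.countP (fun a => a ≤ c) = 0 := by
          rw [List.countP_eq_zero]
          intro a ha
          simp only [decide_eq_true_eq]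
          intro hac
          exact hb (le_trans ((List.pairwise_cons.mp hL).1 a ha) hac)
        rw [List.countP_cons, h0] at hc
        simp [hb] at hc

/-- W2g : get version. -/
lemma sorted_get_le (L : List ℝ) (hL : L.Pairwise (· ≤ ·)) (i : ℕ) (h : i < L.length) (c : ℝ)
    (hc : i + 1 ≤ L.countP (fun a => a ≤ c)) : L.get ⟨i, h⟩ ≤ c := by
  refine sorted_take_le L hL (i+1) c hc _ ?_
  have hlt : i < (L.take (i+1)).length := by
    rw [List.length_take]; omega
  have he : (L.take (i+1)).get ⟨i, hlt⟩ = L.get ⟨i, h⟩ := by simp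
  exact he ▸ List.get_mem _ _

/-- W3 : monotonicity of entries of a sorted list. -/
lemma sorted_get_mono (L : List ℝ) (hL : L.Pairwise (· ≤ ·)) {i j : ℕ} (hij : i ≤ j)
    (hj : j < L.length) : L.get ⟨i, lt_of_le_of_lt hij hj⟩ ≤ L.get ⟨j, hj⟩ := by
  rcases eq_or_lt_of_le hij with rfl | hij
  · exact le_rfl
  · exact hL.rel_get_of_lt (a := ⟨i, _⟩) (b := ⟨j, hj⟩) (by exact hij)


variable {X : Type*} [MetricSpace X]

open scoped Classical

lemma getD_eq_get' {α : Type*} (l : List α) (d : α) {n : ℕ} (hn : n < l.length) :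
    l.getD n d = l.get ⟨n, hn⟩ := List.getD_eq_get _ _ ⟨n, hn⟩

noncomputable def cnt (P : Finset X) (x : X) (c : ℝ) : ℕ :=
  (P.filter (fun p => dist x p ≤ c)).card

lemma length_sortedDists (P : Finset X) (x : X) : (sortedDists P x).length = P.card := by
  simp [sortedDists]

lemma sorted_sortedDists (P : Finset X) (x : X) : (sortedDists P x).Pairwise (· ≤ ·) :=
  Multiset.pairwise_sort _ _

lemma mem_sortedDists {P : Finset X} {x : X} {a : ℝ} :
    a ∈ sortedDists P x ↔ ∃ p ∈ P, dist x p = a := by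
  rw [sortedDists, Multiset.mem_sort, Multiset.mem_map]
  simp only [Finset.mem_val]

lemma nonneg_sortedDists {P : Finset X} {x : X} {a : ℝ} (h : a ∈ sortedDists P x) : 0 ≤ a := by
  obtain ⟨p, _, rfl⟩ := mem_sortedDists.mp h
  exact dist_nonneg

lemma countP_sortedDists (P : Finset X) (x : X) (c : ℝ) :
    (sortedDists P x).countP (fun a => a ≤ c) = cnt P x c := by
  have h1 : ((sortedDists P x : List ℝ) : Multiset ℝ) = P.val.map (dist x) :=
    Multiset.sort_eq _ _
  have h2 : Multiset.countP (fun a => a ≤ c) ((sortedDists P x : List ℝ) : Multiset ℝ)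
      = (sortedDists P x).countP (fun a => a ≤ c) := Multiset.coe_countP _ _
  rw [← h2, h1, Multiset.countP_map, cnt, Finset.card_filter]
  simp [Multiset.countP_eq_card_filter, Finset.sum_boole, Finset.filter_val]
  congr 1

lemma cnt_mono_c (P : Finset X) (x : X) {c c' : ℝ} (h : c ≤ c') : cnt P x c ≤ cnt P x c' := by
  apply Finset.card_le_card
  intro p hp
  rw [Finset.mem_filter] at hp ⊢
  exact ⟨hp.1, hp.2.trans h⟩

lemma cnt_mono_set {P P' : Finset X} (h : P' ⊆ P) (x : X) (c : ℝ) :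
    cnt P' x c ≤ cnt P x c := by
  apply Finset.card_le_card
  intro p hp
  rw [Finset.mem_filter] at hp ⊢
  exact ⟨h hp.1, hp.2⟩

lemma cnt_le_card (P : Finset X) (x : X) (c : ℝ) : cnt P x c ≤ P.card :=
  Finset.card_le_card (Finset.filter_subset _ _)

/-- the `k`-th smallest distance from `x` to `P`. -/
noncomputable def Rad (P : Finset X) (k : ℕ) (x : X) : ℝ :=
  (sortedDists P x).getD (k-1) 0

lemma Rad_eq_get (P : Finset X) (k : ℕ) (x : X) (hk : 1 ≤ k) (hcard : k ≤ P.card) :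
    Rad P k x = (sortedDists P x).get ⟨k-1, by rw [length_sortedDists]; omega⟩ := by
  apply getD_eq_get'

lemma sum_sq_nonneg (A : List ℝ) : 0 ≤ (A.map (fun r => r ^ 2)).sum := by
  apply List.sum_nonneg
  intro a ha
  obtain ⟨b, _, rfl⟩ := List.mem_map.mp ha
  positivity

lemma kdist_nonneg (P : Finset X) (k : ℕ) (x : X) : 0 ≤ kdist P k x := Real.sqrt_nonneg _

lemma kdist_sq (P : Finset X) (k : ℕ) (x : X) :
    (kdist P k x) ^ 2 = (1 / (k : ℝ)) * (((sortedDists P x).take k).map (fun r => r ^ 2)).sum := by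
  rw [kdist, Real.sq_sqrt]
  exact mul_nonneg (by positivity) (sum_sq_nonneg _)

/-- K1 : if at least `k` points of `P` are within distance `R` of `x` then `kdist ≤ R`. -/
lemma kdist_le_of_cnt (P : Finset X) (k : ℕ) (x : X) (R : ℝ) (hk : 1 ≤ k)
    (h : k ≤ cnt P x R) : kdist P k x ≤ R := by
  have hR : 0 ≤ R := by
    have h1 : 1 ≤ cnt P x R := le_trans hk h
    rw [cnt, Finset.one_le_card] at h1
    obtain ⟨p, hp⟩ := h1
    rw [Finset.mem_filter] at hp
    exact le_trans dist_nonneg hp.2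
  have hle : ∀ a ∈ (sortedDists P x).take k, a ≤ R := by
    apply sorted_take_le _ (sorted_sortedDists P x)
    rw [countP_sortedDists]; exact h
  have hsum : (((sortedDists P x).take k).map (fun r => r ^ 2)).sum ≤ (k : ℝ) * R ^ 2 := by
    have h1 : (((sortedDists P x).take k).map (fun r => r ^ 2)).sum
        ≤ (((sortedDists P x).take k).map (fun r => r ^ 2)).length • (R ^ 2) := by
      apply List.sum_le_card_nsmul
      intro a ha
      obtain ⟨b, hb, rfl⟩ := List.mem_map.mp ha
      have h0 : 0 ≤ b := nonneg_sortedDists (List.mem_of_mem_take hb)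
      exact pow_le_pow_left₀ h0 (hle b hb) 2
    calc (((sortedDists P x).take k).map (fun r => r ^ 2)).sum
        ≤ (((sortedDists P x).take k).map (fun r => r ^ 2)).length • (R ^ 2) := h1
      _ ≤ (k : ℝ) * R ^ 2 := by
          rw [List.length_map, List.length_take, nsmul_eq_mul]
          apply mul_le_mul_of_nonneg_right _ (sq_nonneg R)
          exact_mod_cast Nat.cast_le.mpr (min_le_left _ _)
  rw [kdist]
  rw [show R = Real.sqrt (R ^ 2) from (Real.sqrt_sq hR).symm]
  apply Real.sqrt_le_sqrt
  rw [div_mul_eq_mul_div, one_mul, div_le_iff₀ (by positivity : (0:ℝ) < (k:ℝ))] at *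
  · calc (((sortedDists P x).take k).map (fun r => r ^ 2)).sum ≤ (k:ℝ) * R ^ 2 := hsum
      _ = R ^ 2 * (k:ℝ) := by ring

/-- K5 : there is a point of `P` within `kdist` of `x`. -/
lemma exists_nearest (P : Finset X) (k : ℕ) (x : X) (hk : 1 ≤ k) (hcard : k ≤ P.card) :
    ∃ p ∈ P, dist x p ≤ kdist P k x := by
  set L := sortedDists P x with hL
  have hlen : L.length = P.card := length_sortedDists P x
  have h0 : 0 < L.length := by omega
  obtain ⟨p, hp, hdist⟩ := mem_sortedDists.mp (List.get_mem L ⟨0, h0⟩)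
  refine ⟨p, hp, ?_⟩
  rw [hdist]
  set r0 := L.get ⟨0, h0⟩ with hr0
  have hr0n : 0 ≤ r0 := nonneg_sortedDists (List.get_mem L ⟨0, h0⟩)
  have hmono : ∀ a ∈ L.take k, r0 ≤ a := by
    intro a ha
    obtain ⟨⟨j, hj⟩, rfl⟩ := List.mem_iff_get.mp (List.mem_of_mem_take ha)
    exact sorted_get_mono L (sorted_sortedDists P x) (Nat.zero_le j) hj
  have hsum : ((L.take k).map (fun r => r ^ 2)).length • (r0 ^ 2)
      ≤ ((L.take k).map (fun r => r ^ 2)).sum := by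
    apply List.card_nsmul_le_sum
    intro a ha
    obtain ⟨b, hb, rfl⟩ := List.mem_map.mp ha
    exact pow_le_pow_left₀ hr0n (hmono b hb) 2
  have hlen2 : ((L.take k).map (fun r => r ^ 2)).length = k := by
    rw [List.length_map, List.length_take]; omega
  rw [hlen2, nsmul_eq_mul] at hsum
  have : r0 ^ 2 ≤ (1 / (k : ℝ)) * ((L.take k).map (fun r => r ^ 2)).sum := by
    rw [div_mul_eq_mul_div, one_mul, le_div_iff₀ (by positivity : (0:ℝ) < (k:ℝ))]
    calc r0 ^ 2 * (k:ℝ) = (k:ℝ) * r0 ^ 2 := by ring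
      _ ≤ _ := hsum
  calc r0 = Real.sqrt (r0 ^ 2) := (Real.sqrt_sq hr0n).symm
    _ ≤ kdist P k x := Real.sqrt_le_sqrt this

/-- auxiliary counting: length = (≤ c) count + (> c) count -/
lemma length_filter_split (T : List ℝ) (c : ℝ) :
    T.length = (T.filter (fun a => a ≤ c)).length + (T.filter (fun a => ¬ (a ≤ c))).length := by
  induction T with
  | nil => simp
  | cons b t ih =>
    by_cases hb : b ≤ c
    · rw [List.filter_cons_of_pos (by simpa using hb),
        List.filter_cons_of_neg (by simpa using hb)]
      simp only [List.length_cons]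
      omega
    · rw [List.filter_cons_of_neg (by simpa using hb),
        List.filter_cons_of_pos (by simpa using hb)]
      simp only [List.length_cons]
      omega

/-- K2 : at least `m` points of `P` are within `√2 · kdist_{2m}` of `x` (Markov). -/
lemma markov (P : Finset X) (x : X) (m : ℕ) (hm : 1 ≤ m) (hcard : 2*m ≤ P.card) :
    m ≤ cnt P x (Real.sqrt 2 * kdist P (2*m) x) := by
  by_contra hcon
  push_neg at hcon
  have hκn : 0 ≤ kdist P (2*m) x := kdist_nonneg P (2*m) x
  have htn : 0 ≤ Real.sqrt 2 * kdist P (2*m) x := by positivity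
  have hlen : (sortedDists P x).length = P.card := length_sortedDists P x
  have hTlen : ((sortedDists P x).take (2*m)).length = 2*m := by
    rw [List.length_take]; omega
  have hcount : ((sortedDists P x).take (2*m)).countP
      (fun a => a ≤ Real.sqrt 2 * kdist P (2*m) x) ≤ m - 1 := by
    have h1 := countP_take_le (sortedDists P x) (2*m)
      (fun a => a ≤ Real.sqrt 2 * kdist P (2*m) x)
    rw [countP_sortedDists] at h1
    omega
  have hFlen : m + 1 ≤ (((sortedDists P x).take (2*m)).filter
      (fun a => ¬ (a ≤ Real.sqrt 2 * kdist P (2*m) x))).length := by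
    have h2 := length_filter_split ((sortedDists P x).take (2*m))
      (Real.sqrt 2 * kdist P (2*m) x)
    have h3 := List.countP_eq_length_filter
      (l := (sortedDists P x).take (2*m))
      (p := fun a => decide (a ≤ Real.sqrt 2 * kdist P (2*m) x))
    omega
  have hFgt : ∀ a ∈ ((sortedDists P x).take (2*m)).filter
      (fun a => ¬ (a ≤ Real.sqrt 2 * kdist P (2*m) x)), Real.sqrt 2 * kdist P (2*m) x < a := by
    intro a ha
    have := List.of_mem_filter ha
    simp only [decide_eq_true_eq] at this
    exact lt_of_not_ge this
  have hsumF : ((((sortedDists P x).take (2*m)).filter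
        (fun a => ¬ (a ≤ Real.sqrt 2 * kdist P (2*m) x))).length : ℝ)
        * (Real.sqrt 2 * kdist P (2*m) x) ^ 2
      ≤ (((((sortedDists P x).take (2*m)).filter
        (fun a => ¬ (a ≤ Real.sqrt 2 * kdist P (2*m) x))).map (fun r => r ^ 2)).sum) := by
    have h1 := List.card_nsmul_le_sum
      (((((sortedDists P x).take (2*m)).filter
        (fun a => ¬ (a ≤ Real.sqrt 2 * kdist P (2*m) x))).map (fun r => r ^ 2)))
      ((Real.sqrt 2 * kdist P (2*m) x) ^ 2) ?_
    · rw [List.length_map, nsmul_eq_mul] at h1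
      exact h1
    · intro a ha
      obtain ⟨b, hb, rfl⟩ := List.mem_map.mp ha
      exact pow_le_pow_left₀ htn (le_of_lt (hFgt b hb)) 2
  have hsumT : (((((sortedDists P x).take (2*m)).filter
        (fun a => ¬ (a ≤ Real.sqrt 2 * kdist P (2*m) x))).map (fun r => r ^ 2)).sum)
      ≤ ((((sortedDists P x).take (2*m)).map (fun r => r ^ 2)).sum) := by
    apply List.Sublist.sum_le_sum
    · exact List.Sublist.map _ List.filter_sublist
    · intro a ha
      obtain ⟨b, _, rfl⟩ := List.mem_map.mp ha
      positivity
  have hS : ((((sortedDists P x).take (2*m)).map (fun r => r ^ 2)).sum)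
      = (2*m : ℝ) * (kdist P (2*m) x) ^ 2 := by
    have h := kdist_sq P (2*m) x
    rw [h]
    have : ((2*m : ℕ) : ℝ) ≠ 0 := by positivity
    push_cast
    field_simp
  have ht2 : (Real.sqrt 2 * kdist P (2*m) x) ^ 2 = 2 * (kdist P (2*m) x) ^ 2 := by
    rw [mul_pow, Real.sq_sqrt (by norm_num : (0:ℝ) ≤ 2)]
  have hineq : ((m:ℝ) + 1) * (2 * (kdist P (2*m) x) ^ 2) ≤ (2*m : ℝ) * (kdist P (2*m) x) ^ 2 := by
    calc ((m:ℝ) + 1) * (2 * (kdist P (2*m) x) ^ 2)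
        ≤ ((((sortedDists P x).take (2*m)).filter
            (fun a => ¬ (a ≤ Real.sqrt 2 * kdist P (2*m) x))).length : ℝ)
            * (Real.sqrt 2 * kdist P (2*m) x) ^ 2 := by
          rw [ht2]
          apply mul_le_mul_of_nonneg_right _ (by positivity)
          exact_mod_cast hFlen
      _ ≤ _ := hsumF.trans (hsumT.trans_eq hS)
  have hκ2 : (kdist P (2*m) x) ^ 2 ≤ 0 := by nlinarith
  have hκ0 : kdist P (2*m) x = 0 := by
    have := sq_nonneg (kdist P (2*m) x)
    have h4 : (kdist P (2*m) x) ^ 2 = 0 := le_antisymm hκ2 this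
    exact pow_eq_zero_iff (by norm_num) |>.mp h4
  obtain ⟨a, ha⟩ := List.exists_mem_of_length_pos (by omega :
    0 < (((sortedDists P x).take (2*m)).filter
      (fun a => ¬ (a ≤ Real.sqrt 2 * kdist P (2*m) x))).length)
  have hat := hFgt a ha
  rw [hκ0, mul_zero] at hat
  have haT : a ∈ (sortedDists P x).take (2*m) := List.mem_of_mem_filter ha
  have ha2 : a ^ 2 ≤ ((((sortedDists P x).take (2*m)).map (fun r => r ^ 2)).sum) := by
    apply List.single_le_sum
    · intro b hb
      obtain ⟨c, _, rfl⟩ := List.mem_map.mp hb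
      positivity
    · exact List.mem_map.mpr ⟨a, haT, rfl⟩
  rw [hS, hκ0] at ha2
  nlinarith

/-- K7 : at least `k` points within `Rad P k x`. -/
lemma cnt_Rad (P : Finset X) (k : ℕ) (x : X) (hk : 1 ≤ k) (hcard : k ≤ P.card) :
    k ≤ cnt P x (Rad P k x) := by
  have h1 : k - 1 < (sortedDists P x).length := by rw [length_sortedDists]; omega
  have := sorted_countP_get (sortedDists P x) (sorted_sortedDists P x) (k-1) h1
  rw [countP_sortedDists, Rad_eq_get P k x hk hcard] at *
  omega

/-- K7b : `Rad P m x ≤ √2 · kdist P (2m) x`. -/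
lemma Rad_le_sqrt2_kdist (P : Finset X) (m : ℕ) (x : X) (hm : 1 ≤ m) (hcard : 2*m ≤ P.card) :
    Rad P m x ≤ Real.sqrt 2 * kdist P (2*m) x := by
  rw [Rad_eq_get P m x hm (by omega)]
  apply sorted_get_le _ (sorted_sortedDists P x)
  rw [countP_sortedDists]
  have := markov P x m hm hcard
  omega

/-- K7c : `Rad` is monotone in `k`. -/
lemma Rad_mono (P : Finset X) (k k' : ℕ) (x : X) (hk : 1 ≤ k) (hkk : k ≤ k')
    (hcard : k' ≤ P.card) : Rad P k x ≤ Rad P k' x := by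
  rw [Rad_eq_get P k x hk (le_trans hkk hcard), Rad_eq_get P k' x (le_trans hk hkk) hcard]
  exact sorted_get_mono _ (sorted_sortedDists P x) (by omega) _

lemma sum_map_getD (T : List ℝ) (f : ℝ → ℝ) :
    (T.map f).sum = ∑ i ∈ Finset.range T.length, f (T.getD i 0) := by
  induction T with
  | nil => simp
  | cons a t ih =>
    rw [List.map_cons, List.sum_cons, ih, List.length_cons, Finset.sum_range_succ']
    simp only [List.getD_cons_succ, List.getD_cons_zero]
    exact (add_comm _ _)

/-- Master root-mean-square comparison lemma (pointwise order statistics + Minkowski). -/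
lemma rms_le_rms_add (A B : List ℝ) (k : ℕ) (hk : 1 ≤ k) (d : ℝ) (hd : 0 ≤ d)
    (hA : A.Pairwise (· ≤ ·)) (hB : B.Pairwise (· ≤ ·))
    (hA0 : ∀ a ∈ A, 0 ≤ a) (hB0 : ∀ b ∈ B, 0 ≤ b)
    (hlen : min k A.length = min k B.length)
    (hcnt : ∀ (l : ℕ), l < k → l < B.length →
        l + 1 ≤ A.countP (fun a => a ≤ B.getD l 0 + d)) :
    Real.sqrt ((1/(k:ℝ)) * ((A.take k).map (fun r => r ^ 2)).sum)
      ≤ Real.sqrt ((1/(k:ℝ)) * ((B.take k).map (fun r => r ^ 2)).sum) + d := by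
  set m := min k B.length with hm
  have lenTB : (B.take k).length = m := by rw [List.length_take]
  have lenTA : (A.take k).length = m := by rw [List.length_take, hlen]
  have hmk : m ≤ k := min_le_left _ _
  -- pointwise bounds
  have hptA : ∀ i, i < m → 0 ≤ (A.take k).getD i 0 := by
    intro i hi
    have hiA : i < (A.take k).length := by omega
    rw [getD_eq_get' _ _ hiA]
    exact hA0 _ (List.mem_of_mem_take (List.get_mem _ _))
  have hptB : ∀ i, i < m → 0 ≤ (B.take k).getD i 0 := by
    intro i hi
    have hiB : i < (B.take k).length := by omega
    rw [getD_eq_get' _ _ hiB]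
    exact hB0 _ (List.mem_of_mem_take (List.get_mem _ _))
  have hpt : ∀ i, i < m → (A.take k).getD i 0 ≤ (B.take k).getD i 0 + d := by
    intro i hi
    have hiA : i < (A.take k).length := by omega
    have hiB : i < (B.take k).length := by omega
    have hiA' : i < A.length := by
      have := List.length_take (i := k) (l := A)
      omega
    have hiB' : i < B.length := by
      have := List.length_take (i := k) (l := B)
      omega
    rw [getD_eq_get' _ _ hiA, getD_eq_get' _ _ hiB]
    have e1 : (A.take k).get ⟨i, hiA⟩ = A.get ⟨i, hiA'⟩ := by simp
    have e2 : (B.take k).get ⟨i, hiB⟩ = B.get ⟨i, hiB'⟩ := by simp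
    rw [e1, e2]
    apply sorted_get_le A hA i hiA'
    have := hcnt i (by omega) hiB'
    rw [getD_eq_get' _ _ hiB'] at this
    exact this
  -- vectors
  set v : EuclideanSpace ℝ (Fin m) := WithLp.toLp 2 (fun i => (B.take k).getD i.1 0) with hv
  set w : EuclideanSpace ℝ (Fin m) := WithLp.toLp 2 (fun i => d) with hw
  have hSA : ((A.take k).map (fun r => r ^ 2)).sum
      = ∑ i : Fin m, ((A.take k).getD i.1 0) ^ 2 := by
    rw [sum_map_getD, lenTA, ← Fin.sum_univ_eq_sum_range]
  have hSB : ((B.take k).map (fun r => r ^ 2)).sum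
      = ∑ i : Fin m, ((B.take k).getD i.1 0) ^ 2 := by
    rw [sum_map_getD, lenTB, ← Fin.sum_univ_eq_sum_range]
  have hnormv : ‖v‖ = Real.sqrt (((B.take k).map (fun r => r ^ 2)).sum) := by
    rw [EuclideanSpace.norm_eq, hSB]
    congr 1
    apply Finset.sum_congr rfl
    intro i _
    rw [Real.norm_eq_abs, sq_abs]
  have hnormw : ‖w‖ = Real.sqrt ((m : ℝ) * d ^ 2) := by
    rw [EuclideanSpace.norm_eq]
    congr 1
    have hwi : ∀ i : Fin m, ‖w i‖ ^ 2 = d ^ 2 := fun i => by rw [Real.norm_eq_abs, sq_abs]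
    rw [Finset.sum_congr rfl (fun i _ => hwi i), Finset.sum_const, Finset.card_univ,
      Fintype.card_fin, nsmul_eq_mul]
  have hsa : Real.sqrt (((A.take k).map (fun r => r ^ 2)).sum) ≤ ‖v + w‖ := by
    rw [EuclideanSpace.norm_eq, hSA]
    apply Real.sqrt_le_sqrt
    apply Finset.sum_le_sum
    intro i _
    have h1 : (v + w) i = (B.take k).getD i.1 0 + d := rfl
    rw [h1, Real.norm_eq_abs, sq_abs]
    have := hpt i.1 i.2
    have h0 := hptA i.1 i.2
    nlinarith [hptB i.1 i.2]
  have htri : ‖v + w‖ ≤ ‖v‖ + ‖w‖ := norm_add_le v w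
  -- assemble
  have h1k : (0:ℝ) ≤ 1/(k:ℝ) := by positivity
  rw [Real.sqrt_mul h1k, Real.sqrt_mul h1k]
  have hmain : Real.sqrt (((A.take k).map (fun r => r ^ 2)).sum)
      ≤ Real.sqrt (((B.take k).map (fun r => r ^ 2)).sum) + Real.sqrt ((m:ℝ) * d ^ 2) := by
    calc Real.sqrt (((A.take k).map (fun r => r ^ 2)).sum) ≤ ‖v + w‖ := hsa
      _ ≤ ‖v‖ + ‖w‖ := htri
      _ = _ := by rw [hnormv, hnormw]
  have hlast : Real.sqrt (1/(k:ℝ)) * Real.sqrt ((m:ℝ) * d ^ 2) ≤ d := by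
    rw [← Real.sqrt_mul h1k]
    have hle : 1/(k:ℝ) * ((m:ℝ) * d ^ 2) ≤ d ^ 2 := by
      have hk0 : (0:ℝ) < (k:ℝ) := by positivity
      rw [div_mul_eq_mul_div, one_mul, div_le_iff₀ hk0]
      have hmk' : (m:ℝ) ≤ (k:ℝ) := by exact_mod_cast hmk
      nlinarith [sq_nonneg d]
    calc Real.sqrt (1/(k:ℝ) * ((m:ℝ) * d ^ 2)) ≤ Real.sqrt (d ^ 2) := Real.sqrt_le_sqrt hle
      _ = d := Real.sqrt_sq hd
  calc Real.sqrt (1/(k:ℝ)) * Real.sqrt (((A.take k).map (fun r => r ^ 2)).sum)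
      ≤ Real.sqrt (1/(k:ℝ)) * (Real.sqrt (((B.take k).map (fun r => r ^ 2)).sum)
          + Real.sqrt ((m:ℝ) * d ^ 2)) := by
        apply mul_le_mul_of_nonneg_left hmain (Real.sqrt_nonneg _)
    _ = Real.sqrt (1/(k:ℝ)) * Real.sqrt (((B.take k).map (fun r => r ^ 2)).sum)
          + Real.sqrt (1/(k:ℝ)) * Real.sqrt ((m:ℝ) * d ^ 2) := by ring
    _ ≤ _ := by
        apply add_le_add_right hlast

lemma cnt_shift (P : Finset X) (x y : X) (c : ℝ) : cnt P x c ≤ cnt P y (c + dist x y) := by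
  apply Finset.card_le_card
  intro p hp
  rw [Finset.mem_filter] at hp ⊢
  refine ⟨hp.1, ?_⟩
  calc dist y p ≤ dist y x + dist x p := dist_triangle _ _ _
    _ ≤ dist x y + c := by rw [dist_comm y x]; linarith [hp.2]
    _ = c + dist x y := by ring

lemma countP_sortedDists_ge (P : Finset X) (x : X) (l : ℕ) (hl : l < P.card) :
    l + 1 ≤ cnt P x ((sortedDists P x).getD l 0) := by
  have hl' : l < (sortedDists P x).length := by rw [length_sortedDists]; exact hl
  rw [← countP_sortedDists, getD_eq_get' _ _ hl']
  exact sorted_countP_get _ (sorted_sortedDists P x) l hl'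

/-- K3 : `kdist` is 1-Lipschitz. -/
lemma kdist_lipschitz (P : Finset X) (k : ℕ) (x y : X) (hk : 1 ≤ k) :
    kdist P k y ≤ kdist P k x + dist x y := by
  rw [kdist, kdist]
  apply rms_le_rms_add (sortedDists P y) (sortedDists P x) k hk (dist x y) dist_nonneg
    (sorted_sortedDists P y) (sorted_sortedDists P x)
    (fun a ha => nonneg_sortedDists ha) (fun a ha => nonneg_sortedDists ha)
    (by rw [length_sortedDists, length_sortedDists])
  intro l hlk hlB
  rw [countP_sortedDists]
  have hl : l < P.card := by rw [length_sortedDists] at hlB; exact hlB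
  calc l + 1 ≤ cnt P x ((sortedDists P x).getD l 0) := countP_sortedDists_ge P x l hl
    _ ≤ cnt P y ((sortedDists P x).getD l 0 + dist x y) := cnt_shift P x y _

/-- K4 : `kdist` grows when passing to a subset (with at least `k` points). -/
lemma kdist_le_subset (P P' : Finset X) (x : X) (k : ℕ) (hk : 1 ≤ k) (hsub : P' ⊆ P)
    (hcard : k ≤ P'.card) : kdist P k x ≤ kdist P' k x := by
  have h := rms_le_rms_add (sortedDists P x) (sortedDists P' x) k hk 0 le_rfl
    (sorted_sortedDists P x) (sorted_sortedDists P' x)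
    (fun a ha => nonneg_sortedDists ha) (fun a ha => nonneg_sortedDists ha)
    (by
      rw [length_sortedDists, length_sortedDists]
      have := Finset.card_le_card hsub
      omega)
    (by
      intro l hlk hlB
      rw [countP_sortedDists, add_zero]
      have hl : l < P'.card := by rw [length_sortedDists] at hlB; exact hlB
      calc l + 1 ≤ cnt P' x ((sortedDists P' x).getD l 0) := countP_sortedDists_ge P' x l hl
        _ ≤ cnt P x _ := cnt_mono_set hsub x _)
  rw [kdist, kdist]
  simpa using h

/-- K6 : `kdist` decreases when removing only points beyond `Rad P k x`. -/
lemma kdist_shrink (P P' : Finset X) (x : X) (k : ℕ) (hk : 1 ≤ k) (hsub : P' ⊆ P)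
    (hcard : k ≤ P.card)
    (hball : ∀ p ∈ P, dist x p ≤ Rad P k x → p ∈ P') :
    kdist P' k x ≤ kdist P k x := by
  have hfil : (P.filter (fun p => dist x p ≤ Rad P k x)) ⊆ P' := by
    intro p hp
    rw [Finset.mem_filter] at hp
    exact hball p hp.1 hp.2
  have hcard' : k ≤ P'.card :=
    le_trans (cnt_Rad P k x hk hcard) (Finset.card_le_card hfil)
  have h := rms_le_rms_add (sortedDists P' x) (sortedDists P x) k hk 0 le_rfl
    (sorted_sortedDists P' x) (sorted_sortedDists P x)
    (fun a ha => nonneg_sortedDists ha) (fun a ha => nonneg_sortedDists ha)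
    (by
      rw [length_sortedDists, length_sortedDists]
      have := Finset.card_le_card hsub
      omega)
    (by
      intro l hlk hlB
      rw [countP_sortedDists, add_zero]
      have hl : l < P.card := by rw [length_sortedDists] at hlB; exact hlB
      have hc : (sortedDists P x).getD l 0 ≤ Rad P k x := by
        rw [Rad_eq_get P k x hk hcard, getD_eq_get' _ _ (by rw [length_sortedDists]; omega)]
        exact sorted_get_mono _ (sorted_sortedDists P x) (by omega) _
      have hsub2 : (P.filter (fun p => dist x p ≤ (sortedDists P x).getD l 0))
          ⊆ (P'.filter (fun p => dist x p ≤ (sortedDists P x).getD l 0)) := by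
        intro p hp
        rw [Finset.mem_filter] at hp ⊢
        exact ⟨hball p hp.1 (le_trans hp.2 hc), hp.2⟩
      calc l + 1 ≤ cnt P x ((sortedDists P x).getD l 0) := countP_sortedDists_ge P x l hl
        _ ≤ cnt P' x _ := Finset.card_le_card hsub2)
  rw [kdist, kdist]
  simpa using h

section Declutter

variable {f : X → ℝ}

lemma mem_declutterAux_acc (rest Q₀ : List X) (q : X) (hq : q ∈ Q₀) :
    q ∈ declutterAux (fun a b => dist a b) f Q₀ rest := by
  induction rest generalizing Q₀ with
  | nil => simpa [declutterAux] using hq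
  | cons p rest ih =>
    by_cases h : ∀ q' ∈ Q₀, 2 * f p ≤ dist p q'
    · simp only [declutterAux, if_pos h]
      exact ih (Q₀ ++ [p]) (List.mem_append_left _ hq)
    · simp only [declutterAux, if_neg h]
      exact ih Q₀ hq

lemma mem_declutterAux_sub (rest Q₀ : List X) (q : X)
    (hq : q ∈ declutterAux (fun a b => dist a b) f Q₀ rest) : q ∈ Q₀ ∨ q ∈ rest := by
  induction rest generalizing Q₀ with
  | nil => left; simpa [declutterAux] using hq
  | cons p rest ih =>
    by_cases h : ∀ q' ∈ Q₀, 2 * f p ≤ dist p q'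
    · simp only [declutterAux, if_pos h] at hq
      rcases ih (Q₀ ++ [p]) hq with h1 | h1
      · rcases List.mem_append.mp h1 with h2 | h2
        · exact Or.inl h2
        · right; simp at h2; simp [h2]
      · right; simp [h1]
    · simp only [declutterAux, if_neg h] at hq
      rcases ih Q₀ hq with h1 | h1
      · exact Or.inl h1
      · right; simp [h1]

lemma declutterAux_cover (hf : ∀ z, 0 ≤ f z) (rest : List X) (Q₀ : List X)
    (hrest : rest.Pairwise (fun a b => f a ≤ f b))
    (hcross : ∀ q ∈ Q₀, ∀ p ∈ rest, f q ≤ f p) :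
    ∀ p ∈ rest, ∃ q ∈ declutterAux (fun a b => dist a b) f Q₀ rest,
      dist p q ≤ 2 * f p ∧ f q ≤ f p := by
  induction rest generalizing Q₀ with
  | nil => simp
  | cons a rest ih =>
    intro p hp
    by_cases h : ∀ q' ∈ Q₀, 2 * f a ≤ dist a q'
    · simp only [declutterAux, if_pos h]
      rcases List.mem_cons.mp hp with rfl | hp'
      · refine ⟨p, mem_declutterAux_acc _ _ _ (List.mem_append_right _ (List.mem_singleton_self p)), ?_, le_rfl⟩
        rw [dist_self]
        have := hf p
        linarith
      · refine ih (Q₀ ++ [a]) hrest.of_cons ?_ p hp'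
        intro q hq p' hp'
        rcases List.mem_append.mp hq with h1 | h1
        · exact hcross q h1 p' (List.mem_cons_of_mem _ hp')
        · rw [List.mem_singleton] at h1
          subst h1
          exact (List.pairwise_cons.mp hrest).1 p' hp'
    · simp only [declutterAux, if_neg h]
      rcases List.mem_cons.mp hp with rfl | hp'
      · push_neg at h
        obtain ⟨q, hq, hdq⟩ := h
        exact ⟨q, mem_declutterAux_acc _ _ _ hq, le_of_lt hdq, hcross q hq p (List.mem_cons_self)⟩
      · exact ih Q₀ hrest.of_cons (fun q hq p' hp'' => hcross q hq p' (List.mem_cons_of_mem _ hp'')) p hp'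

lemma declutterAux_pairwise (rest Q₀ : List X)
    (hrest : rest.Pairwise (fun a b => f a ≤ f b))
    (hQ₀ : Q₀.Pairwise (fun a b => 2 * f b ≤ dist b a))
    (hcross : ∀ q ∈ Q₀, ∀ p ∈ rest, f q ≤ f p) :
    (declutterAux (fun a b => dist a b) f Q₀ rest).Pairwise (fun a b => 2 * f b ≤ dist b a) := by
  induction rest generalizing Q₀ with
  | nil => simpa [declutterAux] using hQ₀
  | cons a rest ih =>
    by_cases h : ∀ q' ∈ Q₀, 2 * f a ≤ dist a q'
    · simp only [declutterAux, if_pos h]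
      apply ih _ hrest.of_cons
      · rw [List.pairwise_append]
        refine ⟨hQ₀, List.pairwise_singleton _ _, ?_⟩
        intro q hq b hb
        rw [List.mem_singleton] at hb
        subst hb
        exact h q hq
      · intro q hq p hp
        rcases List.mem_append.mp hq with h1 | h1
        · exact hcross q h1 p (List.mem_cons_of_mem _ hp)
        · rw [List.mem_singleton] at h1
          subst h1
          exact (List.pairwise_cons.mp hrest).1 p hp
    · simp only [declutterAux, if_neg h]
      exact ih Q₀ hrest.of_cons hQ₀ (fun q hq p hp => hcross q hq p (List.mem_cons_of_mem _ hp))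

end Declutter

section DeclWrap

variable {f : X → ℝ} {P : Finset X} {Q : List X}

lemma declutterAux_sorted (rest Q₀ : List X)
    (hrest : rest.Pairwise (fun a b => f a ≤ f b))
    (hQ₀ : Q₀.Pairwise (fun a b => f a ≤ f b))
    (hcross : ∀ q ∈ Q₀, ∀ p ∈ rest, f q ≤ f p) :
    (declutterAux (fun a b => dist a b) f Q₀ rest).Pairwise (fun a b => f a ≤ f b) := by
  induction rest generalizing Q₀ with
  | nil => simpa [declutterAux] using hQ₀
  | cons a rest ih =>
    by_cases h : ∀ q' ∈ Q₀, 2 * f a ≤ dist a q'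
    · simp only [declutterAux, if_pos h]
      apply ih _ hrest.of_cons
      · rw [List.pairwise_append]
        refine ⟨hQ₀, List.pairwise_singleton _ _, ?_⟩
        intro q hq b hb
        rw [List.mem_singleton] at hb
        rw [hb]
        exact hcross q hq a (List.mem_cons_self)
      · intro q hq p hp
        rcases List.mem_append.mp hq with h1 | h1
        · exact hcross q h1 p (List.mem_cons_of_mem _ hp)
        · rw [List.mem_singleton] at h1
          subst h1
          exact (List.pairwise_cons.mp hrest).1 p hp
    · simp only [declutterAux, if_neg h]
      exact ih Q₀ hrest.of_cons hQ₀ (fun q hq p hp => hcross q hq p (List.mem_cons_of_mem _ hp))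

lemma decl_mem (h : IsDeclutterOutput (fun a b => dist a b) f P Q) {q : X} (hq : q ∈ Q) :
    q ∈ P := by
  obtain ⟨L, hperm, hsort, rfl⟩ := h
  rcases mem_declutterAux_sub L [] q hq with h1 | h1
  · simp at h1
  · rw [← Finset.mem_toList]
    exact hperm.subset h1

lemma decl_cover (h : IsDeclutterOutput (fun a b => dist a b) f P Q) (hf : ∀ z, 0 ≤ f z)
    {p : X} (hp : p ∈ P) : ∃ q ∈ Q, dist p q ≤ 2 * f p ∧ f q ≤ f p := by
  obtain ⟨L, hperm, hsort, rfl⟩ := h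
  have hpL : p ∈ L := (hperm.mem_iff).mpr (Finset.mem_toList.mpr hp)
  exact declutterAux_cover hf L [] hsort (by simp) p hpL

lemma decl_sep (h : IsDeclutterOutput (fun a b => dist a b) f P Q) {q q' : X}
    (hq : q ∈ Q) (hq' : q' ∈ Q) (hlt : f q' < f q) : 2 * f q ≤ dist q q' := by
  obtain ⟨L, hperm, hsort, rfl⟩ := h
  set QQ := declutter (fun a b => dist a b) f L with hQQ
  have hpair : QQ.Pairwise (fun a b => 2 * f b ≤ dist b a) :=
    declutterAux_pairwise L [] hsort (List.Pairwise.nil) (by simp)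
  have hsorted : QQ.Pairwise (fun a b => f a ≤ f b) :=
    declutterAux_sorted L [] hsort (List.Pairwise.nil) (by simp)
  obtain ⟨i, hi⟩ := List.mem_iff_get.mp hq'
  obtain ⟨j, hj⟩ := List.mem_iff_get.mp hq
  rcases lt_trichotomy i j with hij | hij | hij
  · have := List.pairwise_iff_get.mp hpair i j hij
    rw [hi, hj] at this
    exact this
  · subst hij
    rw [hi] at hj
    subst hj
    exact absurd hlt (lt_irrefl _)
  · have := List.pairwise_iff_get.mp hsorted j i hij
    rw [hi, hj] at this
    exact absurd hlt (not_lt.mpr this)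

end DeclWrap

lemma phase1_step (P Pi Pi' : Finset X) (K : Set X) (i : ℕ) (hi : 1 ≤ i) (εi : ℝ)
    (hcard : 2^i ≤ P.card)
    (hup : ∀ x ∈ K, kdist P (2^i) x ≤ εi)
    (hlow : ∀ p ∈ P, εi / 2 ≤ kdist P (2^i) p)
    (hsub : Pi ⊆ P)
    (hInv : ∀ x ∈ K, ∀ p ∈ P, dist x p ≤ Rad P (2^i) x → p ∈ Pi)
    (hstep : IsParfreeStep Pi Pi' (2^i)) :
    ∀ x ∈ K, ∀ p ∈ P, dist x p ≤ Rad P (2^(i-1)) x → p ∈ Pi' := by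
  obtain ⟨Q, hQ, hdef⟩ := hstep
  intro x hx p hp hdist
  have hs := Real.sq_sqrt (show (0:ℝ) ≤ 2 by norm_num)
  have hs0 := Real.sqrt_nonneg 2
  have hk1 : 1 ≤ 2^i := Nat.one_le_two_pow
  have h2i : 2 * 2^(i-1) = 2^i := by
    conv_rhs => rw [show i = (i-1)+1 by omega]
    rw [pow_succ]
    ring
  have hk1' : (1:ℕ) ≤ 2^(i-1) := Nat.one_le_two_pow
  have hεnn : 0 ≤ εi := le_trans (kdist_nonneg P (2^i) x) (hup x hx)
  have hPicard : 2^i ≤ Pi.card := by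
    refine le_trans (cnt_Rad P (2^i) x hk1 hcard) (Finset.card_le_card ?_)
    intro p' hp'
    rw [Finset.mem_filter] at hp'
    exact hInv x hx p' hp'.1 hp'.2
  have hkxP : kdist P (2^i) x ≤ εi := hup x hx
  have hkx : kdist Pi (2^i) x ≤ εi :=
    le_trans (kdist_shrink P Pi x (2^i) hk1 hsub hcard (hInv x hx)) hkxP
  have hpPi : p ∈ Pi := hInv x hx p hp
    (le_trans hdist (Rad_mono P (2^(i-1)) (2^i) x hk1' (by
      calc 2^(i-1) ≤ 2 * 2^(i-1) := by omega
        _ = 2^i := h2i) hcard))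
  have hRad : Rad P (2^(i-1)) x ≤ Real.sqrt 2 * εi := by
    have h := Rad_le_sqrt2_kdist P (2^(i-1)) x hk1' (by rw [h2i]; exact hcard)
    rw [h2i] at h
    calc Rad P (2^(i-1)) x ≤ Real.sqrt 2 * kdist P (2^i) x := h
      _ ≤ Real.sqrt 2 * εi := mul_le_mul_of_nonneg_left hkxP hs0
  obtain ⟨p', hp'Pi, hp'near⟩ := exists_nearest Pi (2^i) x hk1 hPicard
  have hl := kdist_lipschitz Pi (2^i) x p' hk1
  have hkp' : kdist Pi (2^i) p' ≤ 2 * εi := by linarith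
  obtain ⟨q, hqQ, hqd, hqf⟩ := decl_cover hQ (fun z => kdist_nonneg Pi (2^i) z) hp'Pi
  have hqPi : q ∈ Pi := decl_mem hQ hqQ
  have hqlow : εi / 2 ≤ kdist Pi (2^i) q :=
    le_trans (hlow q (hsub hqPi)) (kdist_le_subset P Pi q (2^i) hk1 hsub hPicard)
  have hdpq : dist p q ≤ (10 + 2*Real.sqrt 2) * kdist Pi (2^i) q := by
    have h1 : dist p q ≤ dist p x + dist x p' + dist p' q := dist_triangle4 p x p' q
    have h2 : dist p x ≤ Real.sqrt 2 * εi := by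
      rw [dist_comm]; exact le_trans hdist hRad
    have h3 : dist x p' ≤ εi := hp'near.trans hkx
    have h4 : dist p' q ≤ 4 * εi := by
      calc dist p' q ≤ 2 * kdist Pi (2^i) p' := hqd
        _ ≤ 4 * εi := by linarith
    calc dist p q ≤ Real.sqrt 2 * εi + εi + 4*εi := by linarith
      _ = (10 + 2*Real.sqrt 2) * (εi/2) := by ring
      _ ≤ (10 + 2*Real.sqrt 2) * kdist Pi (2^i) q :=
        mul_le_mul_of_nonneg_left hqlow (by positivity)
  rw [hdef, Finset.mem_filter]
  exact ⟨hpPi, q, hqQ, hdpq⟩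

lemma phase2_step (Pj Pj' : Finset X) (j : ℕ) (hj : 1 ≤ j) (x c : X) (ρ D : ℝ)
    (hc : c ∈ Pj) (hρ : 0 ≤ ρ) (hD : 0 ≤ D) (hxc : dist x c ≤ D)
    (hcount : 2^j ≤ (Pj.filter (fun p => dist c p ≤ ρ)).card)
    (hstep : IsParfreeStep Pj Pj' (2^j)) :
    ∃ (c' : X) (ρ' D' : ℝ), c' ∈ Pj' ∧ 0 ≤ ρ' ∧ 0 ≤ D' ∧ D' + 3*ρ' ≤ D + 3*ρ ∧
      dist x c' ≤ D' ∧ 2^(j-1) ≤ (Pj'.filter (fun p => dist c' p ≤ ρ')).card := by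
  obtain ⟨Q, hQ, hdef⟩ := hstep
  have hs := Real.sq_sqrt (show (0:ℝ) ≤ 2 by norm_num)
  have hs0 := Real.sqrt_nonneg 2
  have hk1 : (1:ℕ) ≤ 2^j := Nat.one_le_two_pow
  have h2j : 2 * 2^(j-1) = 2^j := by
    conv_rhs => rw [show j = (j-1)+1 by omega]
    rw [pow_succ]
    ring
  have hκ : kdist Pj (2^j) c ≤ ρ := kdist_le_of_cnt Pj (2^j) c ρ hk1 hcount
  have hκ0 : 0 ≤ kdist Pj (2^j) c := kdist_nonneg _ _ _
  obtain ⟨q, hqQ, hqd, hqf⟩ := decl_cover hQ (fun z => kdist_nonneg _ _ z) hc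
  have hqPj : q ∈ Pj := decl_mem hQ hqQ
  have hqk0 : 0 ≤ kdist Pj (2^j) q := kdist_nonneg _ _ _
  by_cases hA : ρ + 2 * kdist Pj (2^j) c ≤ (10 + 2*Real.sqrt 2) * kdist Pj (2^j) q
  · refine ⟨c, ρ, D, ?_, hρ, hD, le_rfl, hxc, ?_⟩
    · rw [hdef, Finset.mem_filter]
      exact ⟨hc, q, hqQ, by linarith⟩
    · refine le_trans (Nat.pow_le_pow_right (by norm_num) (by omega : j - 1 ≤ j))
        (le_trans hcount (Finset.card_le_card ?_))
      intro p hp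
      rw [Finset.mem_filter] at hp
      rw [Finset.mem_filter]
      refine ⟨?_, hp.2⟩
      rw [hdef, Finset.mem_filter]
      refine ⟨hp.1, q, hqQ, ?_⟩
      calc dist p q ≤ dist p c + dist c q := dist_triangle _ _ _
        _ ≤ ρ + 2 * kdist Pj (2^j) c := by
            rw [dist_comm p c]
            linarith [hp.2, hqd]
        _ ≤ (10 + 2*Real.sqrt 2) * kdist Pj (2^j) q := hA
  · push_neg at hA
    have h3ρ : (10 + 2*Real.sqrt 2) * kdist Pj (2^j) q ≤ 3*ρ := by linarith
    have h7 : 7 * Real.sqrt 2 ≤ 10 := by nlinarith [sq_nonneg (7*Real.sqrt 2 - 10)]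
    have hpos : (0:ℝ) < 10 + 2*Real.sqrt 2 := by positivity
    have key : (10 + 2*Real.sqrt 2) * (3 * (Real.sqrt 2 * kdist Pj (2^j) q))
        ≤ (10 + 2*Real.sqrt 2) * ρ := by
      have e1 : 3*Real.sqrt 2*((10 + 2*Real.sqrt 2) * kdist Pj (2^j) q)
          ≤ 3*Real.sqrt 2*(3*ρ) := mul_le_mul_of_nonneg_left h3ρ (by positivity)
      have e2 : 0 ≤ (10 - 7*Real.sqrt 2)*ρ := mul_nonneg (by linarith) hρ
      nlinarith [e1, e2]
    have hkey : 3 * (Real.sqrt 2 * kdist Pj (2^j) q) ≤ ρ := le_of_mul_le_mul_left key hpos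
    have hcardPj : 2^j ≤ Pj.card := le_trans hcount
      (Finset.card_le_card (Finset.filter_subset _ _))
    refine ⟨q, Real.sqrt 2 * kdist Pj (2^j) q, D + 2*ρ, ?_, by positivity, by linarith, ?_, ?_, ?_⟩
    · rw [hdef, Finset.mem_filter]
      refine ⟨hqPj, q, hqQ, ?_⟩
      rw [dist_self]
      positivity
    · linarith
    · calc dist x q ≤ dist x c + dist c q := dist_triangle _ _ _
        _ ≤ D + 2*ρ := by linarith [hqd, hκ]
    · have hm := markov Pj q (2^(j-1)) Nat.one_le_two_pow (by rw [h2j]; exact hcardPj)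
      rw [h2j] at hm
      refine le_trans hm (Finset.card_le_card ?_)
      intro p hp
      rw [Finset.mem_filter] at hp    -- here hp : p ∈ Pj ∧ dist q p ≤ √2 * kdist Pj (2^j) q
      rw [Finset.mem_filter]
      refine ⟨?_, hp.2⟩
      rw [hdef, Finset.mem_filter]
      refine ⟨hp.1, q, hqQ, ?_⟩
      rw [dist_comm p q]
      calc dist q p ≤ Real.sqrt 2 * kdist Pj (2^j) q := hp.2
        _ ≤ (10 + 2*Real.sqrt 2) * kdist Pj (2^j) q :=
            mul_le_mul_of_nonneg_right (by linarith) hqk0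

lemma upper_bound (P Pi Pi' : Finset X) (K : Set X) (hK : IsCompact K) (hKne : K.Nonempty)
    (i : ℕ) (εi : ℝ)
    (hcard : 2^i ≤ P.card)
    (hup : ∀ x ∈ K, kdist P (2^i) x ≤ εi)
    (hcond2 : ∀ z : X, infDist z K ≤ kdist P (2^i) z + εi)
    (hsub : Pi ⊆ P)
    (hInv : ∀ x ∈ K, ∀ p ∈ P, dist x p ≤ Rad P (2^i) x → p ∈ Pi)
    (hstep : IsParfreeStep Pi Pi' (2^i)) :
    ∀ p ∈ Pi', infDist p K ≤ (67 + 12*Real.sqrt 2) * εi := by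
  obtain ⟨Q, hQ, hdef⟩ := hstep
  intro p hp
  rw [hdef, Finset.mem_filter] at hp
  obtain ⟨hpPi, q, hqQ, hpq⟩ := hp
  have hs := Real.sq_sqrt (show (0:ℝ) ≤ 2 by norm_num)
  have hs0 := Real.sqrt_nonneg 2
  have hk1 : (1:ℕ) ≤ 2^i := Nat.one_le_two_pow
  obtain ⟨x₀, hx₀⟩ := hKne
  have hεnn : 0 ≤ εi := le_trans (kdist_nonneg P (2^i) x₀) (hup x₀ hx₀)
  have hPicard : 2^i ≤ Pi.card := by
    refine le_trans (cnt_Rad P (2^i) x₀ hk1 hcard) (Finset.card_le_card ?_)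
    intro p' hp'
    rw [Finset.mem_filter] at hp'
    exact hInv x₀ hx₀ p' hp'.1 hp'.2
  have hqPi : q ∈ Pi := decl_mem hQ hqQ
  have hqP : kdist P (2^i) q ≤ kdist Pi (2^i) q :=
    kdist_le_subset P Pi q (2^i) hk1 hsub hPicard
  have hinf_q : infDist q K ≤ kdist Pi (2^i) q + εi := le_trans (hcond2 q) (by linarith)
  obtain ⟨x, hxK, hxdist⟩ := hK.exists_infDist_eq_dist ⟨x₀, hx₀⟩ q
  have hkx : kdist Pi (2^i) x ≤ εi :=
    le_trans (kdist_shrink P Pi x (2^i) hk1 hsub hcard (hInv x hxK)) (hup x hxK)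
  obtain ⟨p', hp'Pi, hp'near⟩ := exists_nearest Pi (2^i) x hk1 hPicard
  have hl := kdist_lipschitz Pi (2^i) x p' hk1
  have hkp' : kdist Pi (2^i) p' ≤ 2 * εi := by linarith
  obtain ⟨q₀, hq₀Q, hq₀d, hq₀f⟩ := decl_cover hQ (fun z => kdist_nonneg _ _ z) hp'Pi
  have hq₀k : kdist Pi (2^i) q₀ ≤ 2*εi := le_trans hq₀f hkp'
  have hη : kdist Pi (2^i) q ≤ 6 * εi := by
    by_contra hcon
    push_neg at hcon
    have hlt : kdist Pi (2^i) q₀ < kdist Pi (2^i) q := by linarith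
    have hsep := decl_sep hQ hqQ hq₀Q hlt
    have htr : dist q q₀ ≤ dist q x + dist x p' + dist p' q₀ := dist_triangle4 _ _ _ _
    have hqx : dist q x ≤ kdist Pi (2^i) q + εi := by
      rw [← hxdist]
      exact hinf_q
    have hxp' : dist x p' ≤ εi := hp'near.trans hkx
    have hp'q₀ : dist p' q₀ ≤ 4*εi := by
      calc dist p' q₀ ≤ 2 * kdist Pi (2^i) p' := hq₀d
        _ ≤ 4*εi := by linarith
    linarith
  have hfinal : infDist p K ≤ infDist q K + dist p q := infDist_le_infDist_add_dist
  have hcoef : (11 + 2*Real.sqrt 2) * kdist Pi (2^i) q ≤ (11 + 2*Real.sqrt 2) * (6*εi) :=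
    mul_le_mul_of_nonneg_left hη (by positivity)
  calc infDist p K ≤ infDist q K + dist p q := hfinal
    _ ≤ (kdist Pi (2^i) q + εi) + (10 + 2*Real.sqrt 2) * kdist Pi (2^i) q := by
        linarith [hpq]
    _ = (11 + 2*Real.sqrt 2) * kdist Pi (2^i) q + εi := by ring
    _ ≤ (11 + 2*Real.sqrt 2) * (6*εi) + εi := by linarith
    _ = (67 + 12*Real.sqrt 2) * εi := by ring

lemma exists_nearest_rad (P : Finset X) (x : X) (hP : P.Nonempty) :
    ∃ p ∈ P, dist x p = Rad P 1 x := by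
  have hc : 1 ≤ P.card := Finset.card_pos.mpr hP
  have h0 : 0 < (sortedDists P x).length := by rw [length_sortedDists]; omega
  obtain ⟨p, hp, hd⟩ := mem_sortedDists.mp (List.get_mem (sortedDists P x) ⟨0, h0⟩)
  refine ⟨p, hp, ?_⟩
  rw [Rad_eq_get P 1 x le_rfl hc, hd]

lemma Rad_one_le (P : Finset X) (x p : X) (hp : p ∈ P) : Rad P 1 x ≤ dist x p := by
  have hc : 1 ≤ P.card := Finset.card_pos.mpr ⟨p, hp⟩
  have h0 : 0 < (sortedDists P x).length := by rw [length_sortedDists]; omega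
  have hmem : dist x p ∈ sortedDists P x := mem_sortedDists.mpr ⟨p, hp, rfl⟩
  obtain ⟨⟨j, hj⟩, hd⟩ := List.mem_iff_get.mp hmem
  rw [Rad_eq_get P 1 x le_rfl hc, ← hd]
  exact sorted_get_mono _ (sorted_sortedDists P x) (Nat.zero_le j) hj

end PFD

open PFD

/-- Guarantee for the parameter-free algorithm ParfreeDeclutter: if P is a weak
(ε_{2^i}, 2)-uniform noisy sample of K for all i > i₀ (up to i* = ⌊log₂ |P|⌋) and a genuine
(ε_{2^{i₀}}, 2)-uniform noisy sample of K, then the final output P₀ satisfies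
δ_H(P₀, K) ≤ (87 + 16√2) ε_{2^{i₀}}. -/
theorem parfree_declutter_guarantee (P : Finset X) (hP : P.Nonempty)
    (K : Set X) (hK : IsCompact K) (hKne : K.Nonempty)
    (i₀ istar : ℕ) (hi₀ : 1 ≤ i₀) (hi₀star : i₀ ≤ istar)
    (histar : istar = Nat.log 2 P.card)
    (ε : ℕ → ℝ)
    -- for all i₀ < i ≤ i*, P is a weak (ε_{2^i}, 2)-uniform noisy sample of K:
    (hweak : ∀ i, i₀ < i → i ≤ istar →
      (∀ x ∈ K, kdist P (2 ^ i) x ≤ ε i) ∧ ∀ p ∈ P, ε i / 2 ≤ kdist P (2 ^ i) p)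
    -- P is a (ε_{2^{i₀}}, 2)-uniform noisy sample of K:
    (huni1 : NoisySample P (2 ^ i₀) K (ε i₀))
    (huni3 : ∀ p ∈ P, ε i₀ / 2 ≤ kdist P (2 ^ i₀) p)
    -- the ParfreeDeclutter iteration:
    (Pseq : ℕ → Finset X) (hstart : Pseq istar = P)
    (hstep : ∀ i, 1 ≤ i → i ≤ istar → IsParfreeStep (Pseq i) (Pseq (i - 1)) (2 ^ i)) :
    hausdorffDist (↑(Pseq 0) : Set X) K ≤ (87 + 16 * Real.sqrt 2) * ε i₀ := by
  have hs := Real.sq_sqrt (show (0:ℝ) ≤ 2 by norm_num)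
  have hs0 := Real.sqrt_nonneg 2
  have hs1 : 1 ≤ Real.sqrt 2 := by nlinarith
  obtain ⟨x₀, hx₀⟩ := hKne
  have hεnn : 0 ≤ ε i₀ := le_trans (kdist_nonneg P (2^i₀) x₀) (huni1.1 x₀ hx₀)
  have hcard : 2^istar ≤ P.card := by
    rw [histar]
    exact Nat.pow_log_le_self 2 (by
      have := Finset.card_pos.mpr hP
      omega)
  have hmono : ∀ j, 1 ≤ j → j ≤ istar → Pseq (j-1) ⊆ Pseq j := by
    intro j h1 h2
    obtain ⟨Q, hQ, hdef⟩ := hstep j h1 h2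
    rw [hdef]
    exact Finset.filter_subset _ _
  -- Phase 1 : downward induction from istar to i₀ - 1
  have phase1 : ∀ n, n ≤ istar - (i₀ - 1) →
      (Pseq (istar - n) ⊆ P ∧
       ∀ x ∈ K, ∀ p ∈ P, dist x p ≤ Rad P (2^(istar - n)) x → p ∈ Pseq (istar - n)) := by
    intro n
    induction n with
    | zero =>
      intro _
      rw [Nat.sub_zero, hstart]
      exact ⟨subset_rfl, fun x hx p hp _ => hp⟩
    | succ n ih =>
      intro hn
      obtain ⟨ihsub, ihinv⟩ := ih (by omega)
      have hi1 : 1 ≤ istar - n := by omega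
      have hii : istar - (n+1) = (istar - n) - 1 := by omega
      have hi₀le : i₀ ≤ istar - n := by omega
      have hile : istar - n ≤ istar := by omega
      have hupi : ∀ x ∈ K, kdist P (2^(istar - n)) x ≤ ε (istar - n) := by
        rcases eq_or_lt_of_le hi₀le with heq | hlt
        · rw [← heq]; exact huni1.1
        · exact (hweak _ hlt hile).1
      have hlowi : ∀ p ∈ P, ε (istar - n) / 2 ≤ kdist P (2^(istar - n)) p := by
        rcases eq_or_lt_of_le hi₀le with heq | hlt
        · rw [← heq]; exact huni3
        · exact (hweak _ hlt hile).2
      have hcards : 2^(istar - n) ≤ P.card :=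
        le_trans (Nat.pow_le_pow_right (by norm_num) hile) hcard
      have hstepi := hstep (istar - n) hi1 hile
      rw [hii]
      exact ⟨le_trans (hmono (istar - n) hi1 hile) ihsub,
        phase1_step P (Pseq (istar - n)) (Pseq ((istar - n) - 1)) K (istar - n) hi1
          (ε (istar - n)) hcards hupi hlowi ihsub ihinv hstepi⟩
  -- Invariant at level i₀ and i₀ - 1
  have hinv_i₀ := phase1 (istar - i₀) (by omega)
  rw [show istar - (istar - i₀) = i₀ by omega] at hinv_i₀
  have hinv_i₀' := phase1 (istar - (i₀ - 1)) le_rfl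
  rw [show istar - (istar - (i₀ - 1)) = i₀ - 1 by omega] at hinv_i₀'
  obtain ⟨hsub_i₀, hInv_i₀⟩ := hinv_i₀
  obtain ⟨hsub_i₀', hInv_i₀'⟩ := hinv_i₀'
  have hcard_i₀ : 2^i₀ ≤ P.card :=
    le_trans (Nat.pow_le_pow_right (by norm_num) hi₀star) hcard
  have h2i₀ : 2 * 2^(i₀-1) = 2^i₀ := by
    conv_rhs => rw [show i₀ = (i₀-1)+1 by omega]
    rw [pow_succ]
    ring
  -- Upper bound : all points of Pseq (i₀ - 1) are close to K
  have hupper : ∀ p ∈ Pseq (i₀ - 1), Metric.infDist p K ≤ (67 + 12*Real.sqrt 2) * ε i₀ :=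
    upper_bound P (Pseq i₀) (Pseq (i₀ - 1)) K hK ⟨x₀, hx₀⟩ i₀ (ε i₀) hcard_i₀
      huni1.1 huni1.2 hsub_i₀ hInv_i₀ (hstep i₀ hi₀ hi₀star)
  -- chain : Pseq 0 ⊆ Pseq (i₀ - 1)
  have hchain : ∀ m, m ≤ i₀ - 1 → Pseq (i₀ - 1 - m) ⊆ Pseq (i₀ - 1) := by
    intro m
    induction m with
    | zero => intro _; rw [Nat.sub_zero]
    | succ m ihm =>
      intro hm
      have h1 : 1 ≤ i₀ - 1 - m := by omega
      have h2 : i₀ - 1 - m ≤ istar := by omega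
      have : i₀ - 1 - (m+1) = (i₀ - 1 - m) - 1 := by omega
      rw [this]
      exact le_trans (hmono (i₀ - 1 - m) h1 h2) (ihm (by omega))
  have hsub0 : Pseq 0 ⊆ Pseq (i₀ - 1) := by
    have := hchain (i₀ - 1) le_rfl
    rw [show i₀ - 1 - (i₀ - 1) = 0 by omega] at this
    exact this
  -- Phase 2 : downward induction from i₀ - 1 to 0
  have phase2 : ∀ n, n ≤ i₀ - 1 → ∀ x ∈ K, ∃ (c : X) (ρ D : ℝ),
      c ∈ Pseq (i₀ - 1 - n) ∧ 0 ≤ ρ ∧ 0 ≤ D ∧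
      D + 3*ρ ≤ (1 + 6*Real.sqrt 2) * ε i₀ ∧ dist x c ≤ D ∧
      2^(i₀ - 1 - n) ≤ ((Pseq (i₀ - 1 - n)).filter (fun p => dist c p ≤ ρ)).card := by
    intro n
    induction n with
    | zero =>
      intro _ x hx
      rw [Nat.sub_zero]
      have hk1 : (1:ℕ) ≤ 2^i₀ := Nat.one_le_two_pow
      obtain ⟨c, hcP, hceq⟩ := exists_nearest_rad P x hP
      obtain ⟨p1, hp1, hp1d⟩ := exists_nearest P (2^i₀) x hk1 hcard_i₀
      have hcd : dist x c ≤ kdist P (2^i₀) x := by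
        rw [hceq]
        exact le_trans (Rad_one_le P x p1 hp1) hp1d
      have hcε : dist x c ≤ ε i₀ := le_trans hcd (huni1.1 x hx)
      have hcmem : c ∈ Pseq (i₀ - 1) := by
        apply hInv_i₀' x hx c hcP
        rw [hceq]
        exact Rad_mono P 1 (2^(i₀-1)) x le_rfl Nat.one_le_two_pow (by omega)
      refine ⟨c, 2*Real.sqrt 2 * ε i₀, ε i₀, hcmem, by positivity, hεnn, by ring_nf; rfl, hcε, ?_⟩
      · refine le_trans (cnt_Rad P (2^(i₀-1)) x Nat.one_le_two_pow (by omega))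
          (Finset.card_le_card ?_)
        intro p hp
        rw [Finset.mem_filter] at hp
        rw [Finset.mem_filter]
        refine ⟨hInv_i₀' x hx p hp.1 hp.2, ?_⟩
        have hRad : Rad P (2^(i₀-1)) x ≤ Real.sqrt 2 * ε i₀ := by
          have h := Rad_le_sqrt2_kdist P (2^(i₀-1)) x Nat.one_le_two_pow
            (by rw [h2i₀]; exact hcard_i₀)
          rw [h2i₀] at h
          exact le_trans h (mul_le_mul_of_nonneg_left (huni1.1 x hx) hs0)
        calc dist c p ≤ dist c x + dist x p := dist_triangle _ _ _
          _ ≤ ε i₀ + Real.sqrt 2 * ε i₀ := by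
              rw [dist_comm c x]
              exact add_le_add hcε (le_trans hp.2 hRad)
          _ ≤ 2*Real.sqrt 2 * ε i₀ := by nlinarith
    | succ n ihn =>
      intro hn x hx
      obtain ⟨c, ρ, D, hcmem, hρ, hD, hbound, hxc, hcount⟩ := ihn (by omega) x hx
      have hj1 : 1 ≤ i₀ - 1 - n := by omega
      have hje : i₀ - 1 - (n+1) = (i₀ - 1 - n) - 1 := by omega
      obtain ⟨c', ρ', D', hc'mem, hρ', hD', hsum, hxc', hcount'⟩ :=
        phase2_step (Pseq (i₀ - 1 - n)) (Pseq ((i₀ - 1 - n) - 1)) (i₀ - 1 - n) hj1 x c ρ D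
          hcmem hρ hD hxc hcount (hstep (i₀ - 1 - n) hj1 (by omega))
      rw [hje]
      exact ⟨c', ρ', D', hc'mem, hρ', hD', le_trans hsum hbound, hxc', hcount'⟩
  have phase2final : ∀ x ∈ K, ∃ c ∈ Pseq 0, dist x c ≤ (1 + 6*Real.sqrt 2) * ε i₀ := by
    intro x hx
    obtain ⟨c, ρ, D, hcmem, hρ, hD, hbound, hxc, _⟩ := phase2 (i₀ - 1) le_rfl x hx
    rw [show i₀ - 1 - (i₀ - 1) = 0 by omega] at hcmem
    exact ⟨c, hcmem, by linarith⟩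
  -- Assemble the Hausdorff bound
  apply Metric.hausdorffDist_le_of_mem_dist
  · positivity
  · intro p hp
    have hp' : p ∈ Pseq (i₀ - 1) := hsub0 (Finset.mem_coe.mp hp)
    have hd := hupper p hp'
    obtain ⟨y, hyK, hy⟩ := hK.exists_infDist_eq_dist ⟨x₀, hx₀⟩ p
    refine ⟨y, hyK, ?_⟩
    rw [← hy]
    calc Metric.infDist p K ≤ (67 + 12*Real.sqrt 2) * ε i₀ := hd
      _ ≤ (87 + 16*Real.sqrt 2) * ε i₀ := by nlinarith [mul_nonneg hs0 hεnn]
  · intro y hy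
    obtain ⟨c, hc, hdist⟩ := phase2final y hy
    refine ⟨c, Finset.mem_coe.mpr hc, ?_⟩
    calc dist y c ≤ (1 + 6*Real.sqrt 2) * ε i₀ := hdist
      _ ≤ (87 + 16*Real.sqrt 2) * ε i₀ := by nlinarith [mul_nonneg hs0 hεnn]
end

section
/- Generalized Declutter guarantee under relaxed axioms: suppose d_X satisfies the relaxed triangle inequality d_X(x,y) ≤ c_X (d_X(x,w)+d_X(w,y)) with c_X ≥ 1 and c_X < 2, and the robust distance d_{P,k} satisfies d_X(x,P) ≤ d_{P,k}(x) and d_{P,k}(x) ≤ c_L (d_{P,k}(y) + d_X(x,y)) with c_L ≥ 1. If P is an ε_k-noisy sample of a compact set K (i.e., d_{P,k} ≤ ε_k on K and d_X(x,K) ≤ d_{P,k}(x)+ε_k for all x), then the output Q of Declutter(P,k) satisfies d_H(K,Q) ≤ m·ε_k, where m = max{ c_L + c_X c_L + 4 c_X c_L² + 1, (2 + c_X² + 4 c_X² c_L)/(2 − c_X) }. -/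
open Metric

variable {X : Type*} [MetricSpace X]

section DeclutterLemmas

variable {Z : Type*} (d : Z → Z → ℝ) (f : Z → ℝ)

lemma declutterAux_mono : ∀ (L Q₀ : List Z) (q : Z), q ∈ Q₀ → q ∈ declutterAux d f Q₀ L := by
  intro L
  induction L with
  | nil => intro Q₀ q hq; simpa [declutterAux] using hq
  | cons p rest ih =>
    intro Q₀ q hq
    rw [declutterAux]
    split
    · exact ih _ _ (by simp [hq])
    · exact ih _ _ hq

lemma declutterAux_subset : ∀ (L Q₀ : List Z) (q : Z),
    q ∈ declutterAux d f Q₀ L → q ∈ Q₀ ∨ q ∈ L := by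
  intro L
  induction L with
  | nil => intro Q₀ q hq; left; simpa [declutterAux] using hq
  | cons p rest ih =>
    intro Q₀ q hq
    rw [declutterAux] at hq
    split at hq
    · rcases ih _ _ hq with h | h
      · rcases List.mem_append.mp h with h | h
        · exact Or.inl h
        · simp at h; right; simp [h]
      · right; simp [h]
    · rcases ih _ _ hq with h | h
      · exact Or.inl h
      · right; simp [h]

lemma declutterAux_append : ∀ (L₁ L₂ Q₀ : List Z),
    declutterAux d f Q₀ (L₁ ++ L₂) = declutterAux d f (declutterAux d f Q₀ L₁) L₂ := by
  intro L₁
  induction L₁ with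
  | nil => intro L₂ Q₀; simp [declutterAux]
  | cons p rest ih =>
    intro L₂ Q₀
    rw [List.cons_append, declutterAux]
    conv_rhs => rw [declutterAux]
    split
    · exact ih _ _
    · exact ih _ _

lemma declutterAux_cover : ∀ (L Q₀ : List Z) (p : Z), p ∈ L →
    p ∈ declutterAux d f Q₀ L ∨ ∃ r ∈ declutterAux d f Q₀ L, d p r < 2 * f p := by
  intro L
  induction L with
  | nil => intro _ _ h; simp at h
  | cons a rest ih =>
    intro Q₀ p hp
    rw [declutterAux]
    split
    · rcases List.mem_cons.mp hp with rfl | hp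
      · exact Or.inl (declutterAux_mono d f _ _ _ (by simp))
      · exact ih _ _ hp
    · rcases List.mem_cons.mp hp with rfl | hp
      · rename_i hcond
        push_neg at hcond
        obtain ⟨r, hr, hlt⟩ := hcond
        exact Or.inr ⟨r, declutterAux_mono d f _ _ _ hr, hlt⟩
      · exact ih _ _ hp

lemma declutterAux_sep : ∀ (L Q₀ : List Z) (q : Z),
    q ∈ declutterAux d f Q₀ L → q ∉ Q₀ → ∀ r ∈ Q₀, 2 * f q ≤ d q r := by
  intro L
  induction L with
  | nil => intro Q₀ q hq hnot; simp [declutterAux] at hq; exact absurd hq hnot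
  | cons a rest ih =>
    intro Q₀ q hq hnot
    rw [declutterAux] at hq
    split at hq
    · rename_i hcond
      by_cases hmem : q ∈ Q₀ ++ [a]
      · rcases List.mem_append.mp hmem with h | h
        · exact absurd h hnot
        · simp at h; subst h; exact hcond
      · intro r hr
        exact ih _ _ hq hmem r (List.mem_append.mpr (Or.inl hr))
    · exact ih _ _ hq hnot

end DeclutterLemmas

set_option maxHeartbeats 1600000 in
/-- Generalized Declutter guarantee under relaxed axioms: a quasi-metric `d` with
relaxed triangle inequality (constant `cX ∈ [1,2)`), and a robust distance `f = d_{P,k}`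
satisfying (A) `d(x,P) ≤ f x` and the relaxed Lipschitz condition (B')
`f x ≤ cL (f y + d x y)`.  The output of Declutter on an ε_k-noisy sample is within
(generalized) Hausdorff distance `m ε` of `K`. -/


theorem declutter_relaxed {Y : Type*} (d : Y → Y → ℝ)
    (hsymm : ∀ x y, d x y = d y x) (hnonneg : ∀ x y, 0 ≤ d x y)
    (hself : ∀ x, d x x = 0)
    (cX : ℝ) (hcX1 : 1 ≤ cX) (hcX2 : cX < 2)
    (htri : ∀ x y w, d x y ≤ cX * (d x w + d w y))
    (P : Finset Y) (hP : P.Nonempty)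
    (f : Y → ℝ)
    (hA : ∀ x : Y, ∃ p ∈ P, d x p ≤ f x)
    (cL : ℝ) (hcL : 1 ≤ cL)
    (hB : ∀ x y : Y, f x ≤ cL * (f y + d x y))
    (K : Set Y) (hKne : K.Nonempty)
    (ε : ℝ)
    -- P is an ε_k-noisy sample of K w.r.t. the robust distance f:
    (hs1 : ∀ x ∈ K, f x ≤ ε)
    (hs2 : ∀ x : Y, ∃ z ∈ K, d x z ≤ f x + ε)
    (Q : List Y) (hQ : IsDeclutterOutput d f P Q)
    (m : ℝ)
    (hm : m = max (cL + cX * cL + 4 * cX * cL ^ 2 + 1)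
      ((2 + cX ^ 2 + 4 * cX ^ 2 * cL) / (2 - cX))) :
    (∀ x ∈ K, ∃ q ∈ Q, d x q ≤ m * ε) ∧ ∀ q ∈ Q, ∃ x ∈ K, d q x ≤ m * ε := by
  obtain ⟨L, hperm, hsort, hQeq⟩ := hQ
  have hnodup : L.Nodup := hperm.nodup_iff.mpr P.nodup_toList
  have hmemL : ∀ p, p ∈ P → p ∈ L := fun p hp => hperm.mem_iff.mpr (Finset.mem_toList.mpr hp)
  have hfnn : ∀ x, 0 ≤ f x := by
    intro x
    obtain ⟨p, _, hp⟩ := hA x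
    exact (hnonneg x p).trans hp
  have hεnn : 0 ≤ ε := by
    obtain ⟨x, hx⟩ := hKne
    exact (hfnn x).trans (hs1 x hx)
  have h2cX : 0 < 2 - cX := by linarith
  have hm1 : cL + cX * cL + 4 * cX * cL ^ 2 + 1 ≤ m := hm ▸ le_max_left _ _
  have hm2 : (2 + cX ^ 2 + 4 * cX ^ 2 * cL) / (2 - cX) ≤ m := hm ▸ le_max_right _ _
  have hm2' : 2 + cX ^ 2 + 4 * cX ^ 2 * cL ≤ m * (2 - cX) := (div_le_iff₀ h2cX).mp hm2
  -- the main structural lemma: if p comes strictly before q (f p < f q) and q is kept,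
  -- then there is a kept r with 2 f q ≤ d q r and d p r ≤ 2 f p
  have main : ∀ p q, p ∈ L → q ∈ L → f p < f q → q ∈ Q →
      ∃ r ∈ Q, 2 * f q ≤ d q r ∧ d p r ≤ 2 * f p := by
    intro p q hpL hqL hflt hqQ
    obtain ⟨L₁, L₂, hLeq⟩ := List.append_of_mem hqL
    have hpL₁ : p ∈ L₁ := by
      rw [hLeq] at hpL
      rcases List.mem_append.mp hpL with h | h
      · exact h
      · rcases List.mem_cons.mp h with rfl | h
        · exact absurd hflt (lt_irrefl _)
        · exfalso
          have hsort' : (q :: L₂).Pairwise (fun a b => f a ≤ f b) :=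
            hsort.sublist (by rw [hLeq]; exact List.sublist_append_right _ _)
          have := List.rel_of_pairwise_cons hsort' h
          linarith
    have hqnotL₁ : q ∉ L₁ := by
      intro hq
      rw [hLeq] at hnodup
      exact (List.disjoint_of_nodup_append hnodup) hq List.mem_cons_self
    set Q₁ := declutterAux d f [] L₁ with hQ₁
    have hOeq : Q = declutterAux d f Q₁ (q :: L₂) := by
      rw [hQeq, hLeq, declutter, declutterAux_append]
    have hqnotQ₁ : q ∉ Q₁ := by
      intro hq
      rcases declutterAux_subset d f _ _ _ hq with h | h
      · simp at h
      · exact hqnotL₁ h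
    have hsep : ∀ r ∈ Q₁, 2 * f q ≤ d q r :=
      declutterAux_sep d f _ _ _ (hOeq ▸ hqQ) hqnotQ₁
    have hmonoQ : ∀ r, r ∈ Q₁ → r ∈ Q := by
      intro r hr; rw [hOeq]; exact declutterAux_mono d f _ _ _ hr
    rcases declutterAux_cover d f L₁ [] p hpL₁ with h | ⟨r, hr, hlt⟩
    · exact ⟨p, hmonoQ p h, hsep p h, by rw [hself]; linarith [hfnn p]⟩
    · exact ⟨r, hmonoQ r hr, hsep r hr, hlt.le⟩
  have hcXnn : (0:ℝ) ≤ cX := by linarith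
  have hc1 : 1 ≤ m := by
    nlinarith [hm1, mul_nonneg hcXnn (show (0:ℝ) ≤ cL by linarith),
      mul_nonneg (show (0:ℝ) ≤ 4*cX by linarith) (sq_nonneg cL)]
  have hc2 : cX + 4 * cX * cL ≤ m := by
    nlinarith [hm1, mul_nonneg hcXnn (show (0:ℝ) ≤ cL - 1 by linarith),
      mul_nonneg (mul_nonneg (show (0:ℝ) ≤ 4*cX by linarith) (show (0:ℝ) ≤ cL by linarith))
        (show (0:ℝ) ≤ cL - 1 by linarith)]
  have hc3 : 2 * cL + 1 ≤ m := by
    nlinarith [hm1, mul_nonneg (show (0:ℝ) ≤ cX - 1 by linarith) (show (0:ℝ) ≤ cL by linarith),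
      mul_nonneg (mul_nonneg (show (0:ℝ) ≤ 4*cX by linarith) (show (0:ℝ) ≤ cL by linarith))
        (show (0:ℝ) ≤ cL by linarith)]
  constructor
  · -- every point of K is covered
    intro x hx
    obtain ⟨p, hpP, hdxp⟩ := hA x
    have hfx : f x ≤ ε := hs1 x hx
    have hdxp' : d x p ≤ ε := hdxp.trans hfx
    have hfp : f p ≤ 2 * cL * ε := by
      have h1 := hB p x
      have h2 : d p x = d x p := hsymm p x
      nlinarith
    rcases declutterAux_cover d f L [] p (hmemL p hpP) with h | ⟨r, hr, hlt⟩
    · refine ⟨p, hQeq ▸ h, ?_⟩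
      calc d x p ≤ ε := hdxp'
        _ = 1 * ε := (one_mul ε).symm
        _ ≤ m * ε := mul_le_mul_of_nonneg_right hc1 hεnn
    · refine ⟨r, hQeq ▸ hr, ?_⟩
      calc d x r ≤ cX * (d x p + d p r) := htri x r p
        _ ≤ cX * (ε + 4 * cL * ε) :=
            mul_le_mul_of_nonneg_left (by linarith) hcXnn
        _ = (cX + 4 * cX * cL) * ε := by ring
        _ ≤ m * ε := mul_le_mul_of_nonneg_right hc2 hεnn
  · -- every kept point is close to K
    intro q hqQ
    have hqQ' : q ∈ declutterAux d f [] L := by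
      rw [hQeq, declutter] at hqQ; exact hqQ
    have hqL : q ∈ L := by
      rcases declutterAux_subset d f L [] q hqQ' with h | h
      · simp at h
      · exact h
    obtain ⟨x, hxK, hdqx⟩ := hs2 q
    refine ⟨x, hxK, ?_⟩
    obtain ⟨p, hpP, hdxp⟩ := hA x
    have hfx : f x ≤ ε := hs1 x hxK
    have hdxp' : d x p ≤ ε := hdxp.trans hfx
    have hfp : f p ≤ 2 * cL * ε := by
      have h1 := hB p x
      have h2 : d p x = d x p := hsymm p x
      nlinarith
    by_cases hcase : f q ≤ f p
    · calc d q x ≤ f q + ε := hdqx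
        _ ≤ (2 * cL + 1) * ε := by linarith
        _ ≤ m * ε := mul_le_mul_of_nonneg_right hc3 hεnn
    · push_neg at hcase
      obtain ⟨r, hrQ, hsep, hpr⟩ := main p q (hmemL p hpP) hqL hcase hqQ
      have h1 : d q r ≤ cX * (d q x + d x r) := htri q r x
      have h2 : d x r ≤ cX * (d x p + d p r) := htri x r p
      have hpr' : d p r ≤ 4 * cL * ε := by linarith
      have e1 : d x r ≤ cX * ε + 4 * cX * cL * ε := by
        nlinarith [mul_le_mul_of_nonneg_left
          (show d x p + d p r ≤ ε + 4 * cL * ε by linarith) hcXnn]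
      have e2 : d q r ≤ cX * (f q + ε) + cX ^ 2 * ε + 4 * cX ^ 2 * cL * ε := by
        nlinarith [mul_le_mul_of_nonneg_left
          (show d q x + d x r ≤ (f q + ε) + (cX * ε + 4 * cX * cL * ε) by linarith) hcXnn]
      have hkey : (2 - cX) * f q ≤ (cX + cX ^ 2 + 4 * cX ^ 2 * cL) * ε := by
        nlinarith [hsep, e2]
      have t1 : (2 - cX) * d q x ≤ (2 - cX) * (f q + ε) :=
        mul_le_mul_of_nonneg_left hdqx h2cX.le
      have t2 : (2 - cX) * (f q + ε) ≤ (2 + cX ^ 2 + 4 * cX ^ 2 * cL) * ε := by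
        nlinarith [hkey]
      have t3 : (2 + cX ^ 2 + 4 * cX ^ 2 * cL) * ε ≤ m * (2 - cX) * ε :=
        mul_le_mul_of_nonneg_right hm2' hεnn
      have t3' : m * (2 - cX) * ε = (2 - cX) * (m * ε) := by ring
      have t4 : (2 - cX) * d q x ≤ (2 - cX) * (m * ε) := by linarith [t1, t2, t3, t3']
      exact le_of_mul_le_mul_left t4 h2cX
end

section
/- In the setting of Lemma (resampling preserves density): if P is a weak (ε_{2k},2)-uniform noisy sample of K and x ∈ K, then there exist p ∈ P and q in the Declutter(P,2k) output Q such that d(p,x) ≤ ε_{2k}, d_{P,2k}(p) ≤ 2ε_{2k}, d(p,q) ≤ 4ε_{2k}, and for any k' ≤ k, all k' nearest neighbors of x in P lie in the ball B(q, (10+2√2) d_{P,2k}(q)). -/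
open Metric

variable {X : Type*} [MetricSpace X]

section Helpers

lemma fin_oe_le {n m : ℕ} (f : Fin n ↪o Fin m) (i : Fin n) : (i : ℕ) ≤ (f i : ℕ) := by
  have h : ∀ j : ℕ, ∀ i : Fin n, (i : ℕ) = j → j ≤ (f i : ℕ) := by
    intro j
    induction j with
    | zero => intro i _; exact Nat.zero_le _
    | succ j ih =>
      intro i hi
      have hj : j < n := by omega
      have h1 := ih ⟨j, hj⟩ rfl
      have h2 : f ⟨j, hj⟩ < f i := f.strictMono (by simp [Fin.lt_def]; omega)
      have h3 := Fin.lt_def.mp h2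
      omega
  exact h _ i rfl

lemma take_forall2_of_sublist {l1 l2 : List ℝ} (hs : l2.Pairwise (· ≤ ·)) (h : List.Sublist l1 l2) :
    List.Forall₂ (· ≤ ·) (l2.take l1.length) l1 := by
  obtain ⟨f, hf⟩ := List.sublist_iff_exists_fin_orderEmbedding_get_eq.mp h
  have hlen : l1.length ≤ l2.length := h.length_le
  apply List.forall₂_of_length_eq_of_get
  · simp [Nat.min_eq_left hlen]
  intro i h1 h2
  have h1' : i < l2.length := lt_of_lt_of_le h2 hlen
  have e1 : (l2.take l1.length).get ⟨i, h1⟩ = l2.get ⟨i, h1'⟩ := by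
    simp [List.get_eq_getElem, List.getElem_take]
  rw [e1, hf ⟨i, h2⟩]
  exact hs.rel_get_of_le (by simpa [Fin.le_def] using fin_oe_le f ⟨i, h2⟩)

lemma sort_sublist_of_le {T M : Multiset ℝ} (h : T ≤ M) :
    List.Sublist (T.sort (· ≤ ·)) (M.sort (· ≤ ·)) := by
  have h1 : List.Subperm (T.sort (· ≤ ·)) (M.sort (· ≤ ·)) := by
    rw [← Multiset.coe_le, Multiset.sort_eq, Multiset.sort_eq]; exact h
  have h2 := List.sublist_insertionSort' (r := (· ≤ ·)) (Multiset.pairwise_sort T _) h1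
  rwa [(Multiset.pairwise_sort M _).insertionSort_eq] at h2

lemma sum_take_sort_le {T M : Multiset ℝ} (h : T ≤ M) :
    ((M.sort (· ≤ ·)).take (Multiset.card T)).sum ≤ T.sum := by
  have hsub := sort_sublist_of_le h
  have hf := take_forall2_of_sublist (Multiset.pairwise_sort M _) hsub
  rw [Multiset.length_sort] at hf
  calc ((M.sort (· ≤ ·)).take (Multiset.card T)).sum ≤ (T.sort (· ≤ ·)).sum :=
        hf.sum_le_sum
    _ = T.sum := by rw [← Multiset.sum_coe, Multiset.sort_eq]

lemma exists_le_map {α β : Type*} [DecidableEq α] [DecidableEq β] {f : α → β} :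
    ∀ {s : Multiset β} (t : Multiset α), s ≤ t.map f → ∃ u, u ≤ t ∧ u.map f = s := by
  intro s
  induction s using Multiset.induction with
  | empty => exact fun t _ => ⟨0, by simp, rfl⟩
  | cons b s ih =>
    intro t h
    have hb : b ∈ t.map f := Multiset.mem_of_le h (Multiset.mem_cons_self _ _)
    obtain ⟨a, ha, hfa⟩ := Multiset.mem_map.mp hb
    have h1 : s ≤ (t.map f).erase b := by
      have := Multiset.erase_le_erase b h
      rwa [Multiset.erase_cons_head] at this
    have h2 : (t.map f).erase b = (t.erase a).map f := by
      conv_lhs => rw [← Multiset.cons_erase ha]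
      rw [Multiset.map_cons, hfa, Multiset.erase_cons_head]
    rw [h2] at h1
    obtain ⟨u, hu, hmap⟩ := ih _ h1
    refine ⟨a ::ₘ u, ?_, by rw [Multiset.map_cons, hfa, hmap]⟩
    calc a ::ₘ u ≤ a ::ₘ t.erase a := Multiset.cons_le_cons _ hu
      _ = t := Multiset.cons_erase ha

end Helpers

lemma declutterAux_mem {X : Type*} (d : X → X → ℝ) (f : X → ℝ) :
    ∀ (L Q : List X) (y : X), y ∈ declutterAux d f Q L → y ∈ Q ∨ y ∈ L := by
  intro L
  induction L with
  | nil => intro Q y h; rw [declutterAux] at h; exact Or.inl h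
  | cons p rest ih =>
    intro Q y h
    rw [declutterAux] at h
    split_ifs at h with hc
    · rcases ih _ _ h with h' | h'
      · rcases List.mem_append.mp h' with h'' | h''
        · exact Or.inl h''
        · simp only [List.mem_singleton] at h''
          exact Or.inr (by simp [h''])
      · exact Or.inr (by simp [h'])
    · rcases ih _ _ h with h' | h'
      · exact Or.inl h'
      · exact Or.inr (by simp [h'])

lemma declutterAux_grows {X : Type*} (d : X → X → ℝ) (f : X → ℝ) :
    ∀ (L Q : List X), ∀ y ∈ Q, y ∈ declutterAux d f Q L := by
  intro L
  induction L with
  | nil => intro Q y h; rw [declutterAux]; exact h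
  | cons p rest ih =>
    intro Q y h
    rw [declutterAux]
    split_ifs with hc
    · exact ih _ y (by simp [h])
    · exact ih _ y h

lemma declutterAux_close {X : Type*} (d : X → X → ℝ) (f : X → ℝ)
    (hd : ∀ y, d y y = 0) (hf : ∀ y, 0 ≤ f y) :
    ∀ (L Q : List X), ∀ p ∈ L, ∃ q ∈ declutterAux d f Q L, d p q ≤ 2 * f p := by
  intro L
  induction L with
  | nil => simp
  | cons p0 rest ih =>
    intro Q p hp
    rw [declutterAux]
    rcases List.mem_cons.mp hp with rfl | hp
    · split_ifs with hc
      · exact ⟨p, declutterAux_grows d f _ _ p (by simp), by rw [hd]; have := hf p; linarith⟩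
      · push_neg at hc
        obtain ⟨q, hq, hlt⟩ := hc
        exact ⟨q, declutterAux_grows d f _ _ q hq, hlt.le⟩
    · split_ifs with hc
      · exact ih _ p hp
      · exact ih _ p hp


section MetricHelpers
variable {X : Type*} [MetricSpace X]

lemma sortedDists_sorted (P : Finset X) (y : X) : (sortedDists P y).Pairwise (· ≤ ·) :=
  Multiset.pairwise_sort _ _

lemma sortedDists_length (P : Finset X) (y : X) : (sortedDists P y).length = P.card := by
  rw [sortedDists, Multiset.length_sort, Multiset.card_map]; rfl

lemma sortedDists_coe (P : Finset X) (y : X) :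
    (sortedDists P y : Multiset ℝ) = P.val.map (dist y) := Multiset.sort_eq _ _

lemma mem_sortedDists_nonneg {P : Finset X} {y : X} {a : ℝ} (h : a ∈ sortedDists P y) :
    0 ≤ a := by
  rw [sortedDists, Multiset.mem_sort, Multiset.mem_map] at h
  obtain ⟨z, _, rfl⟩ := h
  exact dist_nonneg

lemma sq_sortedDists (P : Finset X) (y : X) :
    (sortedDists P y).map (fun r => r ^ 2) =
      (P.val.map (fun z => dist y z ^ 2)).sort (· ≤ ·) := by
  refine (fun h1 h2 h3 => List.Perm.eq_of_pairwise' (r := (· ≤ ·)) h2 h3 h1) ?_ ?_ ?_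
  · rw [← Multiset.coe_eq_coe, ← Multiset.map_coe, sortedDists_coe, Multiset.sort_eq,
      Multiset.map_map]
    rfl
  · rw [List.pairwise_map]
    refine List.Pairwise.imp_of_mem ?_ (sortedDists_sorted P y)
    intro a b ha hb hab
    exact pow_le_pow_left₀ (mem_sortedDists_nonneg ha) hab 2
  · exact Multiset.pairwise_sort _ _

lemma ksum_nonneg (P : Finset X) (m : ℕ) (y : X) :
    0 ≤ (((sortedDists P y).take m).map (fun r => r ^ 2)).sum := by
  apply List.sum_nonneg
  intro b hb
  rw [List.mem_map] at hb
  obtain ⟨c, _, rfl⟩ := hb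
  positivity

lemma kdist_nonneg (P : Finset X) (m : ℕ) (y : X) : 0 ≤ kdist P m y := Real.sqrt_nonneg _

lemma kdist_sq (P : Finset X) (m : ℕ) (hm : 1 ≤ m) (y : X) :
    kdist P m y ^ 2 = (1 / (m : ℝ)) * (((sortedDists P y).take m).map (fun r => r ^ 2)).sum := by
  rw [kdist, Real.sq_sqrt]
  have h1 : (0:ℝ) < m := by positivity
  have := ksum_nonneg P m y
  positivity

lemma sorted_head_le {l : List ℝ} (hs : l.Pairwise (· ≤ ·)) (h0 : 0 < l.length) {b : ℝ}
    (hb : b ∈ l) : l[0] ≤ b := by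
  cases l with
  | nil => simp at h0
  | cons a l =>
    rcases List.mem_cons.mp hb with rfl | hb
    · simp
    · simpa using (List.pairwise_cons.mp hs).1 b hb

lemma exists_near (P : Finset X) (m : ℕ) (hm : 1 ≤ m) (hmP : m ≤ P.card) (y : X) :
    ∃ p ∈ P, dist y p ≤ kdist P m y := by
  have hlen : (sortedDists P y).length = P.card := sortedDists_length P y
  have h0 : 0 < (sortedDists P y).length := by omega
  have hmem0 : (sortedDists P y)[0] ∈ sortedDists P y := List.getElem_mem h0
  have hmem : (sortedDists P y)[0] ∈ (P.val.map (dist y)) := by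
    rw [← sortedDists_coe P y, Multiset.mem_coe]
    exact hmem0
  obtain ⟨p, hp, hdp⟩ := Multiset.mem_map.mp hmem
  refine ⟨p, hp, ?_⟩
  have hr0 : (0:ℝ) ≤ (sortedDists P y)[0] := mem_sortedDists_nonneg hmem0
  have hkey : (m : ℝ) * (sortedDists P y)[0] ^ 2 ≤
      ((((sortedDists P y).take m).map (fun s => s ^ 2))).sum := by
    have hlen2 : (((sortedDists P y).take m).map (fun s => s ^ 2)).length = m := by
      simp [List.length_take]; omega
    have := List.card_nsmul_le_sum (l := ((sortedDists P y).take m).map (fun s => s ^ 2))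
      (n := (sortedDists P y)[0] ^ 2) ?_
    · rw [hlen2, nsmul_eq_mul] at this; exact this
    · intro b hb
      rw [List.mem_map] at hb
      obtain ⟨c, hc, rfl⟩ := hb
      have hcr : c ∈ sortedDists P y := List.mem_of_mem_take hc
      exact pow_le_pow_left₀ hr0 (sorted_head_le (sortedDists_sorted P y) h0 hcr) 2
  have h2 : (sortedDists P y)[0] ≤ kdist P m y := by
    have hm0 : (0:ℝ) < m := by positivity
    rw [kdist]
    rw [show (sortedDists P y)[0] = Real.sqrt ((sortedDists P y)[0] ^ 2) from
      (Real.sqrt_sq hr0).symm]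
    apply Real.sqrt_le_sqrt
    rw [one_div, inv_mul_eq_div, le_div_iff₀ hm0]
    linarith [hkey]
  rw [hdp]; exact h2

lemma ksum_le_sum_map {P : Finset X} {m : ℕ} (p : X) {S : Multiset X} (hS : S ≤ P.val)
    (hcard : Multiset.card S = m) :
    (((sortedDists P p).take m).map (fun r => r ^ 2)).sum ≤
      (S.map (fun z => dist p z ^ 2)).sum := by
  have h1 : ((sortedDists P p).map (fun r => r ^ 2)).take m =
      ((P.val.map (fun z => dist p z ^ 2)).sort (· ≤ ·)).take m := by
    rw [sq_sortedDists]
  have h2 : ((sortedDists P p).take m).map (fun r => r ^ 2) =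
      ((sortedDists P p).map (fun r => r ^ 2)).take m := List.map_take
  rw [h2, h1]
  have hT : S.map (fun z => dist p z ^ 2) ≤ P.val.map (fun z => dist p z ^ 2) :=
    Multiset.map_le_map hS
  have := sum_take_sort_le hT
  rwa [Multiset.card_map, hcard] at this

lemma kdist_sq_le (P : Finset X) (m : ℕ) (hm : 1 ≤ m) (hmP : m ≤ P.card) (x p : X) :
    kdist P m p ^ 2 ≤ 2 * kdist P m x ^ 2 + 2 * dist x p ^ 2 := by
  classical
  have hm0 : (0:ℝ) < m := by positivity
  -- extract the m nearest neighbors of x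
  have htake : ((((sortedDists P x).take m) : List ℝ) : Multiset ℝ) ≤ P.val.map (dist x) := by
    rw [← sortedDists_coe P x, Multiset.coe_le]
    exact (List.take_sublist _ _).subperm
  obtain ⟨S, hSle, hSmap⟩ := exists_le_map _ htake
  have hlenx : (sortedDists P x).length = P.card := sortedDists_length P x
  have hScard : Multiset.card S = m := by
    have := congrArg Multiset.card hSmap
    rw [Multiset.card_map] at this
    rw [this, Multiset.coe_card, List.length_take]
    omega
  have key := ksum_le_sum_map (P := P) (m := m) p hSle hScard
  have hpt : ∀ z ∈ S, dist p z ^ 2 ≤ 2 * dist x z ^ 2 + 2 * dist x p ^ 2 := by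
    intro z hz
    have h1 : dist p z ≤ dist x p + dist x z := by
      rw [dist_comm x p]; exact dist_triangle p x z
    have h2 : dist p z ^ 2 ≤ (dist x p + dist x z) ^ 2 :=
      pow_le_pow_left₀ dist_nonneg h1 2
    nlinarith [sq_nonneg (dist x p - dist x z)]
  have step : (S.map (fun z => dist p z ^ 2)).sum ≤
      (S.map (fun z => 2 * dist x z ^ 2 + 2 * dist x p ^ 2)).sum :=
    Multiset.sum_map_le_sum_map _ _ hpt
  have split : (S.map (fun z => 2 * dist x z ^ 2 + 2 * dist x p ^ 2)).sum =
      2 * (S.map (fun z => dist x z ^ 2)).sum + (m : ℝ) * (2 * dist x p ^ 2) := by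
    rw [Multiset.sum_map_add]
    congr 1
    · rw [← Multiset.sum_map_mul_left]
    · rw [Multiset.map_const', Multiset.sum_replicate, hScard, nsmul_eq_mul]
  have hSx : (S.map (fun z => dist x z ^ 2)).sum =
      (((sortedDists P x).take m).map (fun r => r ^ 2)).sum := by
    have : S.map (fun z => dist x z ^ 2) = (S.map (dist x)).map (fun r => r ^ 2) := by
      rw [Multiset.map_map]; rfl
    rw [this, hSmap, Multiset.map_coe, Multiset.sum_coe]
  rw [kdist_sq P m hm p, kdist_sq P m hm x]
  rw [hSx] at split
  have : (((sortedDists P p).take m).map (fun r => r ^ 2)).sum ≤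
      2 * (((sortedDists P x).take m).map (fun r => r ^ 2)).sum + (m:ℝ) * (2 * dist x p ^ 2) := by
    calc _ ≤ _ := key
    _ ≤ _ := step
    _ = _ := split
  calc (1 / (m:ℝ)) * (((sortedDists P p).take m).map (fun r => r ^ 2)).sum
      ≤ (1 / (m:ℝ)) * (2 * (((sortedDists P x).take m).map (fun r => r ^ 2)).sum
          + (m:ℝ) * (2 * dist x p ^ 2)) :=
        mul_le_mul_of_nonneg_left this (by positivity)
    _ = 2 * ((1 / (m:ℝ)) * (((sortedDists P x).take m).map (fun r => r ^ 2)).sum)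
          + 2 * dist x p ^ 2 := by
        field_simp

lemma nn_bound (P : Finset X) (k : ℕ) (hk : 1 ≤ k) (hkP : 2 * k ≤ P.card) (x a : X)
    (hcp : List.countP (fun t => decide (t < dist x a)) (sortedDists P x) ≤ k - 1) :
    dist x a ≤ Real.sqrt 2 * kdist P (2 * k) x := by
  have hlen : (sortedDists P x).length = P.card := sortedDists_length P x
  have hd0 : (0:ℝ) ≤ dist x a := dist_nonneg
  -- entries at index ≥ k-1 are ≥ dist x a
  have hd2 : ∀ i, (hi : i < (sortedDists P x).length) → k - 1 ≤ i →
      dist x a ≤ (sortedDists P x)[i] := by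
    intro i hi hik
    by_contra hlt
    push_neg at hlt
    have hall : ∀ b ∈ (sortedDists P x).take (i + 1), b < dist x a := by
      intro b hb
      obtain ⟨j, hj, rfl⟩ := List.mem_iff_getElem.mp hb
      have hj' : j < i + 1 := by
        have := List.length_take (i := i+1) (l := sortedDists P x); omega
      rw [List.getElem_take]
      calc (sortedDists P x)[j] ≤ (sortedDists P x)[i] := by
            rcases Nat.lt_or_ge j i with h | h
            · exact (sortedDists_sorted P x).rel_get_of_lt (by simpa using h)
            · have : j = i := by omega
              subst this; exact le_refl _
        _ < dist x a := hlt
    have hcount1 : List.countP (fun t => decide (t < dist x a))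
        ((sortedDists P x).take (i + 1)) = i + 1 := by
      rw [List.countP_eq_length.mpr (by intro b hb; simpa using hall b hb)]
      simp [List.length_take]
      omega
    have hcount2 := List.Sublist.countP_le (p := fun t => decide (t < dist x a))
      (List.take_sublist (i+1) (sortedDists P x))
    omega
  -- sum over the middle block
  have hk2 : ((sortedDists P x).take (2 * k)).length = 2 * k := by
    simp [List.length_take]; omega
  have hblock : (k : ℝ) * dist x a ^ 2 ≤
      (((sortedDists P x).take (2 * k)).map (fun r => r ^ 2)).sum := by
    set t := ((sortedDists P x).take (2 * k)).map (fun r => r ^ 2) with ht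
    have htlen : t.length = 2 * k := by rw [ht, List.length_map]; exact hk2
    have hsplit : t.sum = (t.take k).sum + (t.drop k).sum := by
      rw [← List.sum_append, List.take_append_drop]
    have h1 : 0 ≤ (t.take k).sum := by
      apply List.sum_nonneg
      intro b hb
      have hb' : b ∈ t := List.mem_of_mem_take hb
      rw [ht, List.mem_map] at hb'
      obtain ⟨c, _, rfl⟩ := hb'
      positivity
    have hdlen : (t.drop k).length = k := by rw [List.length_drop, htlen]; omega
    have h2 : (k:ℝ) * dist x a ^ 2 ≤ (t.drop k).sum := by
      have := List.card_nsmul_le_sum (l := t.drop k) (n := dist x a ^ 2) ?_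
      · rwa [hdlen, nsmul_eq_mul] at this
      · intro b hb
        obtain ⟨j, hj, rfl⟩ := List.mem_iff_getElem.mp hb
        have hjk : k + j < (sortedDists P x).length := by
          rw [hdlen] at hj; omega
        have he : (t.drop k)[j] = (sortedDists P x)[k + j] ^ 2 := by
          simp [ht, List.getElem_drop, List.getElem_map, List.getElem_take]
        rw [he]
        exact pow_le_pow_left₀ hd0 (hd2 (k + j) hjk (by omega)) 2
    linarith
  -- conclude
  have hsq := kdist_sq P (2*k) (by omega) x
  have h2k0 : (0:ℝ) < (2*k : ℕ) := by positivity
  have hle : dist x a ^ 2 ≤ 2 * kdist P (2*k) x ^ 2 := by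
    have hk0 : (0:ℝ) < (k:ℝ) := by positivity
    rw [hsq]
    have he : 2 * ((1/((2*k:ℕ):ℝ)) * (((sortedDists P x).take (2*k)).map (fun r => r ^ 2)).sum)
        = (((sortedDists P x).take (2*k)).map (fun r => r ^ 2)).sum / (k:ℝ) := by
      push_cast
      field_simp
    rw [he, le_div_iff₀ hk0]
    linarith [hblock]
  calc dist x a = Real.sqrt (dist x a ^ 2) := (Real.sqrt_sq hd0).symm
    _ ≤ Real.sqrt (2 * kdist P (2*k) x ^ 2) := Real.sqrt_le_sqrt hle
    _ = Real.sqrt 2 * kdist P (2*k) x := by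
        rw [Real.sqrt_mul (by norm_num), Real.sqrt_sq (kdist_nonneg P (2*k) x)]

end MetricHelpers

/-- Key step of the resampling lemma: for a weak (ε_{2k},2)-uniform noisy sample P of K
and any x ∈ K, there are p ∈ P and q in the Declutter(P,2k) output with d(p,x) ≤ ε,
d_{P,2k}(p) ≤ 2ε, d(p,q) ≤ 4ε, and for every k' ≤ k, every set of k' nearest neighbors
of x in P is contained in the ball B(q, (10+2√2) d_{P,2k}(q)). -/
theorem resample_nearest_neighbors_kept (P : Finset X) (k : ℕ) (hk : 1 ≤ k)
    (hkP : 2 * k ≤ P.card) (K : Set X) (hK : IsCompact K) (hKne : K.Nonempty)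
    (ε : ℝ)
    (hweak1 : ∀ x ∈ K, kdist P (2 * k) x ≤ ε)
    (hweak3 : ∀ p ∈ P, ε / 2 ≤ kdist P (2 * k) p)
    (Q : List X)
    (hQ : IsDeclutterOutput (fun a b => dist a b) (kdist P (2 * k)) P Q)
    (x : X) (hx : x ∈ K) :
    ∃ p ∈ P, ∃ q ∈ Q, dist p x ≤ ε ∧ kdist P (2 * k) p ≤ 2 * ε ∧ dist p q ≤ 4 * ε ∧
      ∀ k' ≤ k, ∀ S : Finset X, S ⊆ P → S.card = k' →
        (∀ a ∈ S, ∀ b ∈ P, b ∉ S → dist x a ≤ dist x b) →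
          ∀ a ∈ S, dist a q ≤ (10 + 2 * Real.sqrt 2) * kdist P (2 * k) q := by
  classical
  obtain ⟨L, hLperm, hLsort, hQdef⟩ := hQ
  have hm1 : 1 ≤ 2 * k := by omega
  have hεnn : 0 ≤ ε := le_trans (kdist_nonneg P (2*k) x) (hweak1 x hx)
  obtain ⟨p, hpP, hpx⟩ := exists_near P (2*k) hm1 hkP x
  have hpx' : dist p x ≤ ε := by
    rw [dist_comm]; exact le_trans hpx (hweak1 x hx)
  have hkp : kdist P (2*k) p ≤ 2 * ε := by
    have h1 := kdist_sq_le P (2*k) hm1 hkP x p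
    have h2 : kdist P (2*k) p ^ 2 ≤ (2*ε)^2 := by
      have hx1 : kdist P (2*k) x ≤ ε := hweak1 x hx
      have hx0 := kdist_nonneg P (2*k) x
      have hd : dist x p ≤ ε := by rw [dist_comm]; exact hpx'
      nlinarith [dist_nonneg (x := x) (y := p)]
    calc kdist P (2*k) p = Real.sqrt (kdist P (2*k) p ^ 2) :=
          (Real.sqrt_sq (kdist_nonneg P (2*k) p)).symm
      _ ≤ Real.sqrt ((2*ε)^2) := Real.sqrt_le_sqrt h2
      _ = 2*ε := Real.sqrt_sq (by linarith)
  have hpL : p ∈ L := hLperm.mem_iff.mpr (by rwa [Finset.mem_toList])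
  obtain ⟨q, hqQ, hpq2⟩ := declutterAux_close (fun a b => dist a b) (kdist P (2*k))
    (fun y => dist_self y) (fun y => kdist_nonneg P (2*k) y) L [] p hpL
  have hqQ' : q ∈ Q := by rw [hQdef, declutter]; exact hqQ
  have hqP : q ∈ P := by
    rcases declutterAux_mem (fun a b => dist a b) (kdist P (2*k)) L [] q hqQ with h | h
    · simp at h
    · rw [← Finset.mem_toList]; exact hLperm.mem_iff.mp h
  have hq2 : ε/2 ≤ kdist P (2*k) q := hweak3 q hqP
  have hpq : dist p q ≤ 4 * ε := le_trans hpq2 (by linarith)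
  refine ⟨p, hpP, q, hqQ', hpx', hkp, hpq, ?_⟩
  intro k' hk' S hSP hScard hNN a haS
  have hsub : P.filter (fun y => dist x y < dist x a) ⊆ S.erase a := by
    intro y hy
    rw [Finset.mem_filter] at hy
    obtain ⟨hyP, hylt⟩ := hy
    have hyS : y ∈ S := by
      by_contra hyS
      exact absurd (hNN a haS y hyP hyS) (by linarith)
    refine Finset.mem_erase.mpr ⟨?_, hyS⟩
    rintro rfl; exact lt_irrefl _ hylt
  have hcard : (P.filter (fun y => dist x y < dist x a)).card ≤ k - 1 := by
    calc (P.filter (fun y => dist x y < dist x a)).card ≤ (S.erase a).card :=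
          Finset.card_le_card hsub
      _ = k' - 1 := by rw [Finset.card_erase_of_mem haS, hScard]
      _ ≤ k - 1 := by omega
  have hcp : List.countP (fun t => decide (t < dist x a)) (sortedDists P x) ≤ k - 1 := by
    have h1 : List.countP (fun t => decide (t < dist x a)) (sortedDists P x)
        = Multiset.countP (fun t => t < dist x a) (↑(sortedDists P x)) :=
      (Multiset.coe_countP _ _).symm
    rw [h1, sortedDists_coe, Multiset.countP_map]
    have h3 : Multiset.card (Multiset.filter (fun y => dist x y < dist x a) P.val)
        = (P.filter (fun y => dist x y < dist x a)).card := rfl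
    rw [h3]
    exact hcard
  have hda : dist x a ≤ Real.sqrt 2 * ε := by
    have hb := nn_bound P k hk hkP x a hcp
    have h2 := hweak1 x hx
    have h20 : (0:ℝ) ≤ Real.sqrt 2 := Real.sqrt_nonneg 2
    calc dist x a ≤ Real.sqrt 2 * kdist P (2*k) x := hb
      _ ≤ Real.sqrt 2 * ε := mul_le_mul_of_nonneg_left h2 h20
  have htri := dist_triangle4 a x p q
  rw [dist_comm a x, dist_comm x p] at htri
  have h20 : (0:ℝ) ≤ Real.sqrt 2 := Real.sqrt_nonneg 2
  have hcoef : (10 + 2*Real.sqrt 2) * (ε/2) ≤ (10 + 2*Real.sqrt 2) * kdist P (2*k) q :=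
    mul_le_mul_of_nonneg_left hq2 (by linarith)
  nlinarith [hda, hpx', hpq, htri]
end
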